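/- arXiv:math/0511535 — 3 statements merged into one kernel-verified Lean document; each statement's English description precedes it below -/
import Mathlib

section
/- Let H be a Hopf algebra over a field k with bijective antipode S, let λ : H → k be a nonzero left integral for H in H⁎, and set Λ := λ ∘ S⁻¹ (a right integral for H in H⁎). Assume the maps h ↦ λ ↼ h and h ↦ h ⇀ Λ from H to H⁎ are injective. Let χ : H → H satisfy λ(x·h) = λ(χ(h)·x) for all x, h ∈ H, and let Ω : H → H satisfy Λ(h·x) = Λ(x·Ω(h)) for all x, h ∈ H (i.e. Ω(h) ⇀ Λ = Λ ↼ h). Then Ω = S⁻¹ ∘ χ ∘ S = S ∘ χ ∘ S⁻¹, and ε ∘ Ω = (ε ∘ χ) ∘ S. -/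
/-!
Helper definitions for Sweedler-notation expressions in a Hopf algebra `H` over a field `k`.
-/

open TensorProduct

variable {k H : Type*} [Field k] [Ring H] [HopfAlgebra k H]

/-- `swl f h = f(h₁) • h₂` in Sweedler notation. -/
noncomputable def swl (f : H →ₗ[k] k) : H →ₗ[k] H :=
  (TensorProduct.lid k H).toLinearMap ∘ₗ (f.rTensor H) ∘ₗ Coalgebra.comul

/-- `swr f h = f(h₂) • h₁` in Sweedler notation. -/
noncomputable def swr (f : H →ₗ[k] k) : H →ₗ[k] H :=
  (TensorProduct.rid k H).toLinearMap ∘ₗ (f.lTensor H) ∘ₗ Coalgebra.comul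

/-- `sw2 f g h = f(h₁) * g(h₂)`, an element of `H`, in Sweedler notation. -/
noncomputable def sw2 (f g : H →ₗ[k] H) : H →ₗ[k] H :=
  (LinearMap.mul' k H) ∘ₗ (TensorProduct.map f g) ∘ₗ Coalgebra.comul

/-- `sw2k f g h = f(h₁) * g(h₂)`, a scalar, in Sweedler notation. -/
noncomputable def sw2k (f g : H →ₗ[k] k) : H →ₗ[k] k :=
  (LinearMap.mul' k k) ∘ₗ (TensorProduct.map f g) ∘ₗ Coalgebra.comul

/-- `comul3 h = (h₁ ⊗ h₂) ⊗ h₃`, the iterated comultiplication `(Δ ⊗ id)Δ`. -/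
noncomputable def comul3 : H →ₗ[k] (H ⊗[k] H) ⊗[k] H :=
  (LinearMap.rTensor H Coalgebra.comul) ∘ₗ Coalgebra.comul

/-- `sw3 f g e h = f(h₁) * g(h₂) * e(h₃)`, an element of `H`, in Sweedler notation. -/
noncomputable def sw3 (f g e : H →ₗ[k] H) : H →ₗ[k] H :=
  (LinearMap.mul' k H) ∘ₗ
    (TensorProduct.map ((LinearMap.mul' k H) ∘ₗ TensorProduct.map f g) e) ∘ₗ comul3


open Coalgebra

namespace S9

local notation "S" => (HopfAlgebra.antipode (R := k) (A := H))
local notation "ε" => (Coalgebra.counit (R := k) (A := H))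
local notation "Δ" => (Coalgebra.comul (R := k) (A := H))

/-! ### generic collapse lemmas, parameterized by an explicit representation of `Δ z` -/

section OfEq

variable {z : H} {ι : Type*} {A : Finset ι} {L R : ι → H}

lemma repr_S_mul (h : Δ z = ∑ i ∈ A, L i ⊗ₜ[k] R i) :
    ∑ i ∈ A, S (L i) * R i = ε z • 1 := by
  have h0 := HopfAlgebra.mul_antipode_rTensor_comul_apply (R := k) z
  rw [h, map_sum, map_sum] at h0
  simp only [LinearMap.rTensor_tmul, LinearMap.mul'_apply] at h0
  rw [h0, Algebra.smul_def, mul_one]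

lemma repr_mul_S (h : Δ z = ∑ i ∈ A, L i ⊗ₜ[k] R i) :
    ∑ i ∈ A, L i * S (R i) = ε z • 1 := by
  have h0 := HopfAlgebra.mul_antipode_lTensor_comul_apply (R := k) z
  rw [h, map_sum, map_sum] at h0
  simp only [LinearMap.lTensor_tmul, LinearMap.mul'_apply] at h0
  rw [h0, Algebra.smul_def, mul_one]

lemma repr_counit_left (h : Δ z = ∑ i ∈ A, L i ⊗ₜ[k] R i) :
    ∑ i ∈ A, ε (L i) • R i = z := by
  have h0 := Coalgebra.rTensor_counit_comul (R := k) z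
  rw [h, map_sum] at h0
  simp only [LinearMap.rTensor_tmul] at h0
  have h2 := congrArg (TensorProduct.lid k H) h0
  rw [map_sum] at h2
  simpa using h2

lemma repr_counit_right (h : Δ z = ∑ i ∈ A, L i ⊗ₜ[k] R i) :
    ∑ i ∈ A, ε (R i) • L i = z := by
  have h0 := Coalgebra.lTensor_counit_comul (R := k) z
  rw [h, map_sum] at h0
  simp only [LinearMap.lTensor_tmul] at h0
  have h2 := congrArg (TensorProduct.rid k H) h0
  rw [map_sum] at h2
  simpa using h2

end OfEq

section OfEq2

variable {z : H} {ι₁ ι₂ : Type*} {A : Finset ι₁} {B : Finset ι₂} {P Q : ι₁ → ι₂ → H}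

lemma repr2_S_mul (h : Δ z = ∑ i ∈ A, ∑ j ∈ B, P i j ⊗ₜ[k] Q i j) :
    ∑ i ∈ A, ∑ j ∈ B, S (P i j) * Q i j = ε z • 1 := by
  have h0 := HopfAlgebra.mul_antipode_rTensor_comul_apply (R := k) z
  rw [h, map_sum, map_sum] at h0
  simp only [map_sum, LinearMap.rTensor_tmul, LinearMap.mul'_apply] at h0
  rw [h0, Algebra.smul_def, mul_one]

lemma repr2_mul_S (h : Δ z = ∑ i ∈ A, ∑ j ∈ B, P i j ⊗ₜ[k] Q i j) :
    ∑ i ∈ A, ∑ j ∈ B, P i j * S (Q i j) = ε z • 1 := by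
  have h0 := HopfAlgebra.mul_antipode_lTensor_comul_apply (R := k) z
  rw [h, map_sum, map_sum] at h0
  simp only [map_sum, LinearMap.lTensor_tmul, LinearMap.mul'_apply] at h0
  rw [h0, Algebra.smul_def, mul_one]

end OfEq2

/-- expansion of `Δ (a * b)` from representations of the factors -/
lemma comul_mul_expand {a b : H} (r : Coalgebra.Repr k a (H × H)) (s : Coalgebra.Repr k b (H × H)) :
    Δ (a * b) = ∑ i ∈ r.index, ∑ j ∈ s.index,
      (r.left i * s.left j) ⊗ₜ[k] (r.right i * s.right j) := by
  rw [Bialgebra.comul_mul, ← r.eq, ← s.eq, Finset.sum_mul_sum]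
  refine Finset.sum_congr rfl fun i _ => Finset.sum_congr rfl fun j _ => ?_
  rw [Algebra.TensorProduct.tmul_mul_tmul]

/-- counit collapse on the left leg -/
lemma sum_counit_smul {a : H} (r : Coalgebra.Repr k a (H × H)) :
    ∑ i ∈ r.index, ε (r.left i) • r.right i = a :=
  repr_counit_left r.eq.symm

/-- counit collapse on the right leg -/
lemma sum_smul_counit {a : H} (r : Coalgebra.Repr k a (H × H)) :
    ∑ i ∈ r.index, ε (r.right i) • r.left i = a :=
  repr_counit_right r.eq.symm

lemma sum_counit_smul_S {a : H} (r : Coalgebra.Repr k a (H × H)) :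
    ∑ i ∈ r.index, ε (r.left i) • S (r.right i) = S a := by
  calc ∑ i ∈ r.index, ε (r.left i) • S (r.right i)
      = S (∑ i ∈ r.index, ε (r.left i) • r.right i) := by rw [map_sum]; simp [map_smul]
    _ = S a := by rw [sum_counit_smul]

lemma sum_smul_counit_S {a : H} (r : Coalgebra.Repr k a (H × H)) :
    ∑ i ∈ r.index, ε (r.right i) • S (r.left i) = S a := by
  calc ∑ i ∈ r.index, ε (r.right i) • S (r.left i)
      = S (∑ i ∈ r.index, ε (r.right i) • r.left i) := by rw [map_sum]; simp [map_smul]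
    _ = S a := by rw [sum_smul_counit]

/-- the FLIP workhorse: coassociativity under an arbitrary linear map -/
lemma flip_sum {M : Type*} [AddCommMonoid M] [Module k M]
    (Φ : H ⊗[k] (H ⊗[k] H) →ₗ[k] M) {a : H} (r : Coalgebra.Repr k a (H × H))
    (c : (i : r.ι) → Coalgebra.Repr k (r.left i) (H × H))
    (d : (i : r.ι) → Coalgebra.Repr k (r.right i) (H × H)) :
    ∑ i ∈ r.index, ∑ j ∈ (c i).index,
      Φ ((c i).left j ⊗ₜ[k] ((c i).right j ⊗ₜ[k] r.right i)) =
    ∑ i ∈ r.index, ∑ j ∈ (d i).index,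
      Φ (r.left i ⊗ₜ[k] ((d i).left j ⊗ₜ[k] (d i).right j)) := by
  have h := Coalgebra.sum_tmul_tmul_eq (R := k) r c d
  have h2 := congrArg Φ h
  rw [map_sum, map_sum] at h2
  simpa [map_sum] using h2

lemma comul_one' : (Δ (1 : H)) = (1 : H) ⊗ₜ[k] (1 : H) := by
  have := map_one (Bialgebra.comulAlgHom k H)
  simpa [Algebra.TensorProduct.one_def] using this

lemma counit_S (a : H) : ε (S a) = ε a := by
  obtain r := ℛ k a
  have h := HopfAlgebra.sum_mul_antipode_eq_smul (R := k) r
  have h2 := congrArg ε h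
  simp only [map_sum, map_smul, Bialgebra.counit_mul, smul_eq_mul] at h2
  calc ε (S a) = ε (S (∑ i ∈ r.index, ε (r.left i) • r.right i)) := by rw [sum_counit_smul]
    _ = ∑ i ∈ r.index, ε (r.left i) * ε (S (r.right i)) := by
        rw [map_sum, map_sum]; simp [smul_eq_mul]
    _ = ε a * ε (1 : H) := h2
    _ = ε a := by simp

lemma S_one : S (1 : H) = 1 := by
  have h := repr_S_mul (k := k) (z := (1:H)) (A := ({0} : Finset ℕ)) (L := fun _ => (1:H))
    (R := fun _ => (1:H)) (by simp [comul_one', Algebra.TensorProduct.one_def])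
  simpa using h

lemma sum4_comm {α β γ δ M : Type*} [AddCommMonoid M] {A : Finset α} {B : Finset β}
    {C : α → Finset γ} {D : β → Finset δ} (F : α → γ → β → δ → M) :
    ∑ i ∈ A, ∑ j ∈ C i, ∑ l ∈ B, ∑ m ∈ D l, F i j l m
      = ∑ l ∈ B, ∑ m ∈ D l, ∑ i ∈ A, ∑ j ∈ C i, F i j l m := by
  calc ∑ i ∈ A, ∑ j ∈ C i, ∑ l ∈ B, ∑ m ∈ D l, F i j l m
      = ∑ i ∈ A, ∑ l ∈ B, ∑ j ∈ C i, ∑ m ∈ D l, F i j l m :=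
        Finset.sum_congr rfl fun i _ => Finset.sum_comm
    _ = ∑ l ∈ B, ∑ i ∈ A, ∑ j ∈ C i, ∑ m ∈ D l, F i j l m := Finset.sum_comm
    _ = ∑ l ∈ B, ∑ i ∈ A, ∑ m ∈ D l, ∑ j ∈ C i, F i j l m :=
        Finset.sum_congr rfl fun l _ => Finset.sum_congr rfl fun i _ => Finset.sum_comm
    _ = ∑ l ∈ B, ∑ m ∈ D l, ∑ i ∈ A, ∑ j ∈ C i, F i j l m :=
        Finset.sum_congr rfl fun l _ => Finset.sum_comm

section Antihom

/-- `M3 (x ⊗ (y ⊗ z)) = x * (y * z)` -/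
noncomputable def M3 : H ⊗[k] (H ⊗[k] H) →ₗ[k] H :=
  (LinearMap.mul' k H) ∘ₗ (LinearMap.lTensor H (LinearMap.mul' k H))

@[simp] lemma M3_tmul (x y z : H) :
    M3 (x ⊗ₜ[k] (y ⊗ₜ[k] z)) = x * (y * z) := by
  simp [M3]

/-- term map for the antihom flip on the first factor -/
noncomputable def Tmap (u v w : H) : H ⊗[k] (H ⊗[k] H) →ₗ[k] H :=
  M3 ∘ₗ (TensorProduct.map (S ∘ₗ LinearMap.mulRight k u)
    (TensorProduct.map (LinearMap.mulRight k v) (LinearMap.mulLeft k (S w) ∘ₗ S)))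

@[simp] lemma Tmap_tmul (u v w z₁ z₂ z₃ : H) :
    Tmap u v w (z₁ ⊗ₜ[k] (z₂ ⊗ₜ[k] z₃)) = S (z₁ * u) * ((z₂ * v) * (S w * S z₃)) := by
  simp [Tmap]

theorem S_mul (a b : H) : S (a * b) = S b * S a := by
  classical
  obtain r := ℛ k a
  obtain s := ℛ k b
  set c : (i : r.ι) → Coalgebra.Repr k (r.left i) (H × H) := fun i => ℛ k (r.left i) with hc
  set d : (i : r.ι) → Coalgebra.Repr k (r.right i) (H × H) := fun i => ℛ k (r.right i) with hd
  set e : (l : s.ι) → Coalgebra.Repr k (s.left l) (H × H) := fun l => ℛ k (s.left l) with he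
  set f : (l : s.ι) → Coalgebra.Repr k (s.right l) (H × H) := fun l => ℛ k (s.right l) with hf
  -- Step 1 : S b * S a = X₁
  have step1 : S b * S a =
      ∑ i ∈ r.index, ∑ j ∈ (c i).index, ∑ l ∈ s.index, ∑ m ∈ (e l).index,
        S ((c i).left j * (e l).left m) *
          (((c i).right j * (e l).right m) * (S (s.right l) * S (r.right i))) := by
    have inner : ∀ i ∈ r.index, ∀ l ∈ s.index,
        (∑ j ∈ (c i).index, ∑ m ∈ (e l).index,
          S ((c i).left j * (e l).left m) *
            (((c i).right j * (e l).right m) * (S (s.right l) * S (r.right i)))) =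
        (ε (r.left i) * ε (s.left l)) • (S (s.right l) * S (r.right i)) := by
      intro i _ l _
      have hcol := repr2_S_mul (comul_mul_expand (c i) (e l))
      calc ∑ j ∈ (c i).index, ∑ m ∈ (e l).index,
            S ((c i).left j * (e l).left m) *
              (((c i).right j * (e l).right m) * (S (s.right l) * S (r.right i)))
          = (∑ j ∈ (c i).index, ∑ m ∈ (e l).index,
              S ((c i).left j * (e l).left m) * ((c i).right j * (e l).right m)) *
              (S (s.right l) * S (r.right i)) := by
            rw [Finset.sum_mul]; refine Finset.sum_congr rfl fun j _ => ?_
            rw [Finset.sum_mul]; refine Finset.sum_congr rfl fun m _ => ?_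
            simp only [mul_assoc]
        _ = (ε (r.left i * s.left l) • (1:H)) * (S (s.right l) * S (r.right i)) := by rw [hcol]
        _ = (ε (r.left i) * ε (s.left l)) • (S (s.right l) * S (r.right i)) := by
            rw [Bialgebra.counit_mul, smul_mul_assoc, one_mul]
    calc S b * S a
        = (∑ l ∈ s.index, ε (s.left l) • S (s.right l)) *
          (∑ i ∈ r.index, ε (r.left i) • S (r.right i)) := by
          rw [sum_counit_smul_S, sum_counit_smul_S]
      _ = ∑ i ∈ r.index, ∑ l ∈ s.index,
            (ε (r.left i) * ε (s.left l)) • (S (s.right l) * S (r.right i)) := by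
          rw [Finset.sum_mul_sum, Finset.sum_comm]
          refine Finset.sum_congr rfl fun i _ => Finset.sum_congr rfl fun l _ => ?_
          rw [smul_mul_assoc, mul_smul_comm, smul_smul, mul_comm (ε (s.left l)) (ε (r.left i))]
      _ = ∑ i ∈ r.index, ∑ l ∈ s.index,
            ∑ j ∈ (c i).index, ∑ m ∈ (e l).index,
            S ((c i).left j * (e l).left m) *
              (((c i).right j * (e l).right m) * (S (s.right l) * S (r.right i))) := by
          refine Finset.sum_congr rfl fun i hi => Finset.sum_congr rfl fun l hl => ?_
          rw [inner i hi l hl]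
      _ = _ := Finset.sum_congr rfl fun i hi => Finset.sum_comm
  -- Step 2 : flip on `a`
  have step2 :
      (∑ i ∈ r.index, ∑ j ∈ (c i).index, ∑ l ∈ s.index, ∑ m ∈ (e l).index,
        S ((c i).left j * (e l).left m) *
          (((c i).right j * (e l).right m) * (S (s.right l) * S (r.right i)))) =
      ∑ i ∈ r.index, ∑ j ∈ (d i).index, ∑ l ∈ s.index, ∑ m ∈ (e l).index,
        S (r.left i * (e l).left m) *
          ((((d i).left j) * (e l).right m) * (S (s.right l) * S ((d i).right j))) := by
    have := flip_sum (Φ := ∑ l ∈ s.index, ∑ m ∈ (e l).index,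
        Tmap ((e l).left m) ((e l).right m) (s.right l)) r c d
    simpa [LinearMap.sum_apply] using this
  -- Step 3 : flip on `b`
  have step3 :
      (∑ i ∈ r.index, ∑ j ∈ (d i).index, ∑ l ∈ s.index, ∑ m ∈ (e l).index,
        S (r.left i * (e l).left m) *
          ((((d i).left j) * (e l).right m) * (S (s.right l) * S ((d i).right j)))) =
      ∑ i ∈ r.index, ∑ j ∈ (d i).index, ∑ l ∈ s.index, ∑ m ∈ (f l).index,
        S (r.left i * s.left l) *
          ((((d i).left j) * ((f l).left m)) * (S ((f l).right m) * S ((d i).right j))) := by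
    have h0 := flip_sum (Φ := ∑ i ∈ r.index, ∑ j ∈ (d i).index,
        (M3 (k := k) (H := H)) ∘ₗ (TensorProduct.map (S ∘ₗ LinearMap.mulLeft k (r.left i))
          (TensorProduct.map (LinearMap.mulLeft k ((d i).left j))
            ((LinearMap.mulRight k (S ((d i).right j))) ∘ₗ S)))) s e f
    simp only [LinearMap.sum_apply, LinearMap.coe_comp, Function.comp_apply,
      TensorProduct.map_tmul, M3_tmul, LinearMap.mulLeft_apply, LinearMap.mulRight_apply] at h0
    calc ∑ i ∈ r.index, ∑ j ∈ (d i).index, ∑ l ∈ s.index, ∑ m ∈ (e l).index,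
          S (r.left i * (e l).left m) *
            ((((d i).left j) * (e l).right m) * (S (s.right l) * S ((d i).right j)))
        = ∑ l ∈ s.index, ∑ m ∈ (e l).index, ∑ i ∈ r.index, ∑ j ∈ (d i).index,
          S (r.left i * (e l).left m) *
            ((((d i).left j) * (e l).right m) * (S (s.right l) * S ((d i).right j))) :=
          sum4_comm _
      _ = ∑ l ∈ s.index, ∑ m ∈ (f l).index, ∑ i ∈ r.index, ∑ j ∈ (d i).index,
          S (r.left i * s.left l) *
            ((((d i).left j) * ((f l).left m)) * (S ((f l).right m) * S ((d i).right j))) := by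
          exact h0
      _ = _ := (sum4_comm _).symm
  -- Step 4 : collapse X₃ to S (a * b)
  have step4 :
      (∑ i ∈ r.index, ∑ j ∈ (d i).index, ∑ l ∈ s.index, ∑ m ∈ (f l).index,
        S (r.left i * s.left l) *
          ((((d i).left j) * ((f l).left m)) * (S ((f l).right m) * S ((d i).right j)))) =
      S (a * b) := by
    have inner : ∀ i, ∀ l,
        (∑ j ∈ (d i).index, ∑ m ∈ (f l).index,
          S (r.left i * s.left l) *
            ((((d i).left j) * ((f l).left m)) * (S ((f l).right m) * S ((d i).right j)))) =
        (ε (r.right i) * ε (s.right l)) • S (r.left i * s.left l) := by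
      intro i l
      have hcolf := HopfAlgebra.sum_mul_antipode_eq_smul (R := k) (f l)
      have hcold := HopfAlgebra.sum_mul_antipode_eq_smul (R := k) (d i)
      calc ∑ j ∈ (d i).index, ∑ m ∈ (f l).index,
            S (r.left i * s.left l) *
              ((((d i).left j) * ((f l).left m)) * (S ((f l).right m) * S ((d i).right j)))
          = S (r.left i * s.left l) * ∑ j ∈ (d i).index,
              ((d i).left j) * ((∑ m ∈ (f l).index, (f l).left m * S ((f l).right m)) *
                S ((d i).right j)) := by
            rw [Finset.mul_sum]
            refine Finset.sum_congr rfl fun j _ => ?_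
            rw [Finset.sum_mul, Finset.mul_sum, Finset.mul_sum]
            exact Finset.sum_congr rfl fun m _ => by simp only [mul_assoc]
        _ = S (r.left i * s.left l) * ∑ j ∈ (d i).index,
              ((d i).left j) * ((ε (s.right l) • (1:H)) * S ((d i).right j)) := by rw [hcolf]
        _ = S (r.left i * s.left l) * (ε (s.right l) • ∑ j ∈ (d i).index,
              ((d i).left j) * S ((d i).right j)) := by
            rw [Finset.smul_sum]
            refine congrArg _ (Finset.sum_congr rfl fun j _ => ?_)
            rw [smul_mul_assoc, one_mul, mul_smul_comm]
        _ = (ε (r.right i) * ε (s.right l)) • S (r.left i * s.left l) := by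
            rw [hcold, smul_smul, mul_smul_comm, mul_one,
              mul_comm (ε (s.right l)) (ε (r.right i))]
    calc ∑ i ∈ r.index, ∑ j ∈ (d i).index, ∑ l ∈ s.index, ∑ m ∈ (f l).index,
          S (r.left i * s.left l) *
            ((((d i).left j) * ((f l).left m)) * (S ((f l).right m) * S ((d i).right j)))
        = ∑ i ∈ r.index, ∑ l ∈ s.index, ∑ j ∈ (d i).index, ∑ m ∈ (f l).index,
          S (r.left i * s.left l) *
            ((((d i).left j) * ((f l).left m)) * (S ((f l).right m) * S ((d i).right j))) :=
          Finset.sum_congr rfl fun i _ => Finset.sum_comm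
      _ = ∑ i ∈ r.index, ∑ l ∈ s.index,
            (ε (r.right i) * ε (s.right l)) • S (r.left i * s.left l) :=
          Finset.sum_congr rfl fun i _ => Finset.sum_congr rfl fun l _ => inner i l
      _ = S ((∑ i ∈ r.index, ε (r.right i) • r.left i) * (∑ l ∈ s.index, ε (s.right l) • s.left l)) := by
          rw [Finset.sum_mul_sum, map_sum]
          refine Finset.sum_congr rfl fun i _ => ?_
          rw [map_sum]
          refine Finset.sum_congr rfl fun l _ => ?_
          rw [smul_mul_assoc, mul_smul_comm, map_smul, map_smul, smul_smul]
      _ = S (a * b) := by rw [sum_smul_counit, sum_smul_counit]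
  rw [step1, step2, step3, step4]

end Antihom

section Anticomul

/-- `Gmap a = ∑ S a₂ ⊗ S a₁` -/
noncomputable def Gmap : H →ₗ[k] H ⊗[k] H :=
  (TensorProduct.comm k H H).toLinearMap ∘ₗ (TensorProduct.map S S) ∘ₗ Coalgebra.comul

lemma Gmap_repr {a : H} (r : Coalgebra.Repr k a (H × H)) :
    Gmap a = ∑ i ∈ r.index, S (r.right i) ⊗ₜ[k] S (r.left i) := by
  rw [Gmap]
  simp only [LinearMap.coe_comp, Function.comp_apply, LinearEquiv.coe_coe]
  rw [← r.eq, map_sum, map_sum]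
  simp

/-- `Θmap x (z₁ ⊗ (z₂ ⊗ z₃)) = (x * S z₃) ⊗ (z₁ * S z₂)` -/
noncomputable def Θmap (x : H) : H ⊗[k] (H ⊗[k] H) →ₗ[k] H ⊗[k] H :=
  (TensorProduct.map (LinearMap.mulLeft k x ∘ₗ S)
      ((LinearMap.mul' k H) ∘ₗ (LinearMap.lTensor H S))) ∘ₗ
    (TensorProduct.comm k (H ⊗[k] H) H).toLinearMap ∘ₗ
    (TensorProduct.assoc k H H H).symm.toLinearMap

@[simp] lemma Θmap_tmul (x z₁ z₂ z₃ : H) :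
    Θmap x (z₁ ⊗ₜ[k] (z₂ ⊗ₜ[k] z₃)) = (x * S z₃) ⊗ₜ[k] (z₁ * S z₂) := by
  simp [Θmap]

lemma theta_lemma (x : H) {y : H} (r : Coalgebra.Repr k y (H × H)) :
    ∑ i ∈ r.index, (x ⊗ₜ[k] r.left i) * Gmap (r.right i) = (x * S y) ⊗ₜ[k] (1 : H) := by
  classical
  set g : (i : r.ι) → Coalgebra.Repr k (r.right i) (H × H) := fun i => ℛ k (r.right i) with hg
  set hh : (i : r.ι) → Coalgebra.Repr k (r.left i) (H × H) := fun i => ℛ k (r.left i) with hhh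
  calc ∑ i ∈ r.index, (x ⊗ₜ[k] r.left i) * Gmap (r.right i)
      = ∑ i ∈ r.index, ∑ j ∈ (g i).index,
          Θmap x (r.left i ⊗ₜ[k] ((g i).left j ⊗ₜ[k] (g i).right j)) := by
        refine Finset.sum_congr rfl fun i _ => ?_
        rw [Gmap_repr (g i), Finset.mul_sum]
        refine Finset.sum_congr rfl fun j _ => ?_
        rw [Θmap_tmul, Algebra.TensorProduct.tmul_mul_tmul]
    _ = ∑ i ∈ r.index, ∑ j ∈ (hh i).index,
          Θmap x ((hh i).left j ⊗ₜ[k] ((hh i).right j ⊗ₜ[k] r.right i)) :=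
        (flip_sum (Θmap x) r hh g).symm
    _ = ∑ i ∈ r.index, (x * S (r.right i)) ⊗ₜ[k] (ε (r.left i) • (1:H)) := by
        refine Finset.sum_congr rfl fun i _ => ?_
        rw [← HopfAlgebra.sum_mul_antipode_eq_smul (R := k) (hh i), TensorProduct.tmul_sum]
        exact Finset.sum_congr rfl fun j _ => by rw [Θmap_tmul]
    _ = (x * S (∑ i ∈ r.index, ε (r.left i) • r.right i)) ⊗ₜ[k] (1 : H) := by
        rw [map_sum, Finset.mul_sum, TensorProduct.sum_tmul]
        exact Finset.sum_congr rfl fun i _ => by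
          simp [tmul_smul, smul_tmul', mul_smul_comm, map_smul]
    _ = (x * S y) ⊗ₜ[k] (1 : H) := by rw [sum_counit_smul]

/-- `Ψmap (z₁ ⊗ (z₂ ⊗ z₃)) = (z₁ ⊗ z₂) * Gmap z₃` -/
noncomputable def Ψmap : H ⊗[k] (H ⊗[k] H) →ₗ[k] H ⊗[k] H :=
  (LinearMap.mul' k (H ⊗[k] H)) ∘ₗ
    (TensorProduct.assoc k H H (H ⊗[k] H)).symm.toLinearMap ∘ₗ
    (LinearMap.lTensor H (LinearMap.lTensor H Gmap))

@[simp] lemma Ψmap_tmul (z₁ z₂ z₃ : H) :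
    Ψmap (z₁ ⊗ₜ[k] (z₂ ⊗ₜ[k] z₃)) = (z₁ ⊗ₜ[k] z₂) * Gmap z₃ := by
  simp [Ψmap]

lemma H7_lemma {m : H} (r : Coalgebra.Repr k m (H × H)) :
    ∑ i ∈ r.index, (Δ (r.left i)) * Gmap (r.right i) = ε m • ((1:H) ⊗ₜ[k] (1:H)) := by
  classical
  set c : (i : r.ι) → Coalgebra.Repr k (r.left i) (H × H) := fun i => ℛ k (r.left i) with hc
  set d : (i : r.ι) → Coalgebra.Repr k (r.right i) (H × H) := fun i => ℛ k (r.right i) with hd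
  calc ∑ i ∈ r.index, (Δ (r.left i)) * Gmap (r.right i)
      = ∑ i ∈ r.index, ∑ j ∈ (c i).index,
          Ψmap ((c i).left j ⊗ₜ[k] ((c i).right j ⊗ₜ[k] r.right i)) := by
        refine Finset.sum_congr rfl fun i _ => ?_
        rw [← (c i).eq, Finset.sum_mul]
        exact Finset.sum_congr rfl fun j _ => (Ψmap_tmul _ _ _).symm
    _ = ∑ i ∈ r.index, ∑ j ∈ (d i).index,
          Ψmap (r.left i ⊗ₜ[k] ((d i).left j ⊗ₜ[k] (d i).right j)) := flip_sum Ψmap r c d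
    _ = ∑ i ∈ r.index, (r.left i * S (r.right i)) ⊗ₜ[k] (1:H) := by
        refine Finset.sum_congr rfl fun i _ => ?_
        calc ∑ j ∈ (d i).index, Ψmap (r.left i ⊗ₜ[k] ((d i).left j ⊗ₜ[k] (d i).right j))
            = ∑ j ∈ (d i).index, (r.left i ⊗ₜ[k] (d i).left j) * Gmap ((d i).right j) :=
              Finset.sum_congr rfl fun j _ => Ψmap_tmul _ _ _
          _ = (r.left i * S (r.right i)) ⊗ₜ[k] (1:H) := theta_lemma (r.left i) (d i)
    _ = (∑ i ∈ r.index, r.left i * S (r.right i)) ⊗ₜ[k] (1:H) := by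
        rw [TensorProduct.sum_tmul]
    _ = ε m • ((1:H) ⊗ₜ[k] (1:H)) := by
        rw [HopfAlgebra.sum_mul_antipode_eq_smul (R := k) r]
        simp [smul_tmul']

/-- `Ξmap (z₁ ⊗ (z₂ ⊗ z₃)) = Δ (S z₁) * (Δ z₂ * Gmap z₃)` -/
noncomputable def Ξmap : H ⊗[k] (H ⊗[k] H) →ₗ[k] H ⊗[k] H :=
  (LinearMap.mul' k (H ⊗[k] H)) ∘ₗ
    (LinearMap.lTensor (H ⊗[k] H) (LinearMap.mul' k (H ⊗[k] H))) ∘ₗ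
    (TensorProduct.map (Coalgebra.comul ∘ₗ S) (TensorProduct.map Coalgebra.comul Gmap))

@[simp] lemma Ξmap_tmul (z₁ z₂ z₃ : H) :
    Ξmap (z₁ ⊗ₜ[k] (z₂ ⊗ₜ[k] z₃)) = Δ (S z₁) * (Δ z₂ * Gmap z₃) := by
  simp [Ξmap]

theorem comul_S (a : H) : Δ (S a) = Gmap a := by
  classical
  obtain r := ℛ k a
  set c : (i : r.ι) → Coalgebra.Repr k (r.left i) (H × H) := fun i => ℛ k (r.left i) with hc
  set d : (i : r.ι) → Coalgebra.Repr k (r.right i) (H × H) := fun i => ℛ k (r.right i) with hd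
  have eval1 :
      (∑ i ∈ r.index, ∑ j ∈ (c i).index,
        Ξmap ((c i).left j ⊗ₜ[k] ((c i).right j ⊗ₜ[k] r.right i))) = Gmap a := by
    calc ∑ i ∈ r.index, ∑ j ∈ (c i).index,
          Ξmap ((c i).left j ⊗ₜ[k] ((c i).right j ⊗ₜ[k] r.right i))
        = ∑ i ∈ r.index,
            (∑ j ∈ (c i).index, Δ (S ((c i).left j)) * Δ ((c i).right j)) * Gmap (r.right i) := by
          refine Finset.sum_congr rfl fun i _ => ?_
          rw [Finset.sum_mul]
          refine Finset.sum_congr rfl fun j _ => ?_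
          rw [Ξmap_tmul, mul_assoc]
      _ = ∑ i ∈ r.index, (ε (r.left i) • ((1:H) ⊗ₜ[k] (1:H))) * Gmap (r.right i) := by
          refine Finset.sum_congr rfl fun i _ => ?_
          congr 1
          calc ∑ j ∈ (c i).index, Δ (S ((c i).left j)) * Δ ((c i).right j)
              = Δ (∑ j ∈ (c i).index, S ((c i).left j) * (c i).right j) := by
                rw [map_sum]
                exact Finset.sum_congr rfl fun j _ => (Bialgebra.comul_mul _ _).symm
            _ = ε (r.left i) • ((1:H) ⊗ₜ[k] (1:H)) := by
                rw [HopfAlgebra.sum_antipode_mul_eq_smul (R := k) (c i), map_smul, comul_one']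
      _ = ∑ i ∈ r.index, Gmap (ε (r.left i) • r.right i) := by
          refine Finset.sum_congr rfl fun i _ => ?_
          rw [smul_mul_assoc,
            show ((1:H) ⊗ₜ[k] (1:H)) = (1 : H ⊗[k] H) from (Algebra.TensorProduct.one_def).symm,
            one_mul, map_smul]
      _ = Gmap a := by rw [← map_sum, sum_counit_smul r]
  have eval2 :
      (∑ i ∈ r.index, ∑ j ∈ (d i).index,
        Ξmap (r.left i ⊗ₜ[k] ((d i).left j ⊗ₜ[k] (d i).right j))) = Δ (S a) := by
    calc ∑ i ∈ r.index, ∑ j ∈ (d i).index,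
          Ξmap (r.left i ⊗ₜ[k] ((d i).left j ⊗ₜ[k] (d i).right j))
        = ∑ i ∈ r.index, Δ (S (r.left i)) * (∑ j ∈ (d i).index, Δ ((d i).left j) * Gmap ((d i).right j)) := by
          refine Finset.sum_congr rfl fun i _ => ?_
          rw [Finset.mul_sum]
          exact Finset.sum_congr rfl fun j _ => Ξmap_tmul _ _ _
      _ = ∑ i ∈ r.index, Δ (S (r.left i)) * (ε (r.right i) • ((1:H) ⊗ₜ[k] (1:H))) := by
          refine Finset.sum_congr rfl fun i _ => ?_
          rw [H7_lemma (d i)]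
      _ = Δ (S a) := by
          rw [← sum_smul_counit_S r, map_sum]
          refine Finset.sum_congr rfl fun i _ => ?_
          rw [map_smul, mul_smul_comm]
          rw [show ((1:H) ⊗ₜ[k] (1:H)) = (1 : H ⊗[k] H) from (Algebra.TensorProduct.one_def).symm,
            mul_one]
  exact eval2.symm.trans ((flip_sum Ξmap r c d).symm.trans eval1)

lemma comul_S_repr {a : H} (r : Coalgebra.Repr k a (H × H)) :
    Δ (S a) = ∑ i ∈ r.index, S (r.right i) ⊗ₜ[k] S (r.left i) := by
  rw [comul_S, Gmap_repr r]

end Anticomul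

section Sprime

variable {S' : H →ₗ[k] H}

lemma S'_mul (hS'l : ∀ x : H, S' (S x) = x) (hS'r : ∀ x : H, S (S' x) = x) (a b : H) :
    S' (a * b) = S' b * S' a := by
  have h : a * b = S (S' b * S' a) := by rw [S_mul, hS'r, hS'r]
  rw [h, hS'l]

lemma S'_one (hS'l : ∀ x : H, S' (S x) = x) : S' (1 : H) = 1 := by
  have := hS'l (1 : H)
  rwa [S_one] at this

lemma counit_S' (hS'r : ∀ x : H, S (S' x) = x) (a : H) : ε (S' a) = ε a := by
  conv_rhs => rw [← hS'r a]
  rw [counit_S]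

lemma comul_S'_repr (hS'l : ∀ x : H, S' (S x) = x) (hS'r : ∀ x : H, S (S' x) = x)
    {a : H} (r : Coalgebra.Repr k a (H × H)) :
    Δ (S' a) = ∑ i ∈ r.index, S' (r.right i) ⊗ₜ[k] S' (r.left i) := by
  obtain t := ℛ k (S' a)
  have h1 : Δ a = ∑ i ∈ t.index, S (t.right i) ⊗ₜ[k] S (t.left i) := by
    conv_lhs => rw [← hS'r a]
    exact comul_S_repr t
  have key : ∑ i ∈ r.index, S' (r.right i) ⊗ₜ[k] S' (r.left i) = Δ (S' a) := by
    calc ∑ i ∈ r.index, S' (r.right i) ⊗ₜ[k] S' (r.left i)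
        = ∑ i ∈ r.index,
            (TensorProduct.map S' S') ((TensorProduct.comm k H H) (r.left i ⊗ₜ[k] r.right i)) := by
          simp
      _ = (TensorProduct.map S' S') ((TensorProduct.comm k H H) (Δ a)) := by
          rw [← map_sum, ← map_sum, r.eq]
      _ = ∑ i ∈ t.index,
            (TensorProduct.map S' S')
              ((TensorProduct.comm k H H) (S (t.right i) ⊗ₜ[k] S (t.left i))) := by
          rw [h1, map_sum, map_sum]
      _ = ∑ i ∈ t.index, t.left i ⊗ₜ[k] t.right i := by
          simp [hS'l]
      _ = Δ (S' a) := t.eq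
  exact key.symm

/-- `∑ a₂ * S' a₁ = ε a • 1` -/
lemma sum_right_mul_S'_left (hS'l : ∀ x : H, S' (S x) = x) (hS'r : ∀ x : H, S (S' x) = x)
    {a : H} (r : Coalgebra.Repr k a (H × H)) :
    ∑ i ∈ r.index, r.right i * S' (r.left i) = ε a • 1 := by
  have h := HopfAlgebra.sum_mul_antipode_eq_smul (R := k) r
  have h2 := congrArg S' h
  rw [map_sum, map_smul] at h2
  calc ∑ i ∈ r.index, r.right i * S' (r.left i)
      = ∑ i ∈ r.index, S' (r.left i * S (r.right i)) := by
        refine Finset.sum_congr rfl fun i _ => ?_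
        rw [S'_mul hS'l hS'r, hS'l]
    _ = ε a • 1 := by rw [h2, S'_one hS'l]

end Sprime

section Integral

variable {lam : H →ₗ[k] k} {S' : H →ₗ[k] H} {χ : H → H}

/-- pointwise form of the left-integral property -/
lemma I1 (hlaml : ∀ h : H, swr lam h = lam h • (1 : H)) {z : H} {ι : Type*} {A : Finset ι}
    {L R : ι → H} (h : Δ z = ∑ i ∈ A, L i ⊗ₜ[k] R i) :
    ∑ i ∈ A, lam (R i) • L i = lam z • 1 := by
  have h0 := hlaml z
  rw [swr] at h0
  simp only [LinearMap.coe_comp, Function.comp_apply, LinearEquiv.coe_coe] at h0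
  rw [h, map_sum, map_sum] at h0
  simpa using h0

lemma I1₂ (hlaml : ∀ h : H, swr lam h = lam h • (1 : H)) {z : H} {ι₁ ι₂ : Type*}
    {A : Finset ι₁} {B : Finset ι₂} {P Q : ι₁ → ι₂ → H}
    (h : Δ z = ∑ i ∈ A, ∑ j ∈ B, P i j ⊗ₜ[k] Q i j) :
    ∑ i ∈ A, ∑ j ∈ B, lam (Q i j) • P i j = lam z • 1 := by
  have h0 := hlaml z
  rw [swr] at h0
  simp only [LinearMap.coe_comp, Function.comp_apply, LinearEquiv.coe_coe] at h0
  rw [h, map_sum, map_sum] at h0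
  simpa [map_sum] using h0

lemma I2₂ (hlaml : ∀ h : H, swr lam h = lam h • (1 : H)) {z : H} {ι₁ ι₂ : Type*}
    {A : Finset ι₁} {B : Finset ι₂} {P Q : ι₁ → ι₂ → H}
    (h : Δ z = ∑ i ∈ A, ∑ j ∈ B, P i j ⊗ₜ[k] Q i j) :
    ∑ i ∈ A, ∑ j ∈ B, lam (Q i j) • S (P i j) = lam z • 1 := by
  have h0 := I1₂ hlaml h
  have h2 := congrArg S h0
  rw [map_sum, map_smul, S_one] at h2
  rw [← h2]
  refine Finset.sum_congr rfl fun i _ => ?_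
  rw [map_sum]
  exact Finset.sum_congr rfl fun j _ => (map_smul _ _ _).symm

/-- separation via `hinjl` -/
lemma sepL (hinjl : Function.Injective (fun h : H => lam ∘ₗ LinearMap.mulLeft k h))
    {u v : H} (h : ∀ x : H, lam (u * x) = lam (v * x)) : u = v := by
  apply hinjl
  exact LinearMap.ext fun x => h x

/-- separation via `hinjr` -/
lemma sepR (hinjr : Function.Injective (fun h : H => (lam ∘ₗ S') ∘ₗ LinearMap.mulRight k h))
    {u v : H} (h : ∀ x : H, lam (S' (x * u)) = lam (S' (x * v))) : u = v := by
  apply hinjr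
  exact LinearMap.ext fun x => h x

lemma chi_add (hinjl : Function.Injective (fun h : H => lam ∘ₗ LinearMap.mulLeft k h))
    (hχ : ∀ x h : H, lam (x * h) = lam (χ h * x)) (u v : H) :
    χ (u + v) = χ u + χ v := by
  refine sepL hinjl fun x => ?_
  rw [← hχ x (u+v), add_mul, map_add, mul_add, map_add, hχ x u, hχ x v]

lemma chi_smul (hinjl : Function.Injective (fun h : H => lam ∘ₗ LinearMap.mulLeft k h))
    (hχ : ∀ x h : H, lam (x * h) = lam (χ h * x)) (c : k) (u : H) :
    χ (c • u) = c • χ u := by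
  refine sepL hinjl fun x => ?_
  rw [← hχ x (c • u), mul_smul_comm, map_smul, smul_mul_assoc, map_smul, hχ x u]

lemma chi_one (hinjl : Function.Injective (fun h : H => lam ∘ₗ LinearMap.mulLeft k h))
    (hχ : ∀ x h : H, lam (x * h) = lam (χ h * x)) : χ (1 : H) = 1 := by
  refine sepL hinjl fun x => ?_
  rw [← hχ x 1, mul_one, one_mul]

lemma chi_mul (hinjl : Function.Injective (fun h : H => lam ∘ₗ LinearMap.mulLeft k h))
    (hχ : ∀ x h : H, lam (x * h) = lam (χ h * x)) (u v : H) :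
    χ (u * v) = χ u * χ v := by
  refine sepL hinjl fun x => ?_
  calc lam (χ (u * v) * x) = lam (x * (u * v)) := (hχ x (u*v)).symm
    _ = lam ((x * u) * v) := by rw [mul_assoc]
    _ = lam (χ v * (x * u)) := hχ (x*u) v
    _ = lam ((χ v * x) * u) := by rw [mul_assoc]
    _ = lam (χ u * (χ v * x)) := hχ (χ v * x) u
    _ = lam ((χ u * χ v) * x) := by rw [mul_assoc]

lemma exists_chiL (hinjl : Function.Injective (fun h : H => lam ∘ₗ LinearMap.mulLeft k h))
    (hχ : ∀ x h : H, lam (x * h) = lam (χ h * x)) :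
    ∃ f : H →ₗ[k] H, ∀ x : H, f x = χ x :=
  ⟨{ toFun := χ,
     map_add' := chi_add hinjl hχ,
     map_smul' := chi_smul hinjl hχ }, fun _ => rfl⟩

end Integral

section IntegralSweedler

variable {lam : H →ₗ[k] k} {S' : H →ₗ[k] H}

/-- term map for `Aprime`: `z₁ ⊗ (z₂ ⊗ z₃) ↦ lam (w * z₃) • (u * (z₂ * S' z₁))` -/
noncomputable def TA (lam : H →ₗ[k] k) (S' : H →ₗ[k] H) (u w : H) :
    H ⊗[k] (H ⊗[k] H) →ₗ[k] H :=
  (LinearMap.mulLeft k u) ∘ₗ (LinearMap.mul' k H) ∘ₗ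
    (TensorProduct.comm k H H).toLinearMap ∘ₗ
    (LinearMap.lTensor H (TensorProduct.rid k H).toLinearMap) ∘ₗ
    (TensorProduct.map S' (TensorProduct.map LinearMap.id (lam ∘ₗ LinearMap.mulLeft k w)))

@[simp] lemma TA_tmul (u w z₁ z₂ z₃ : H) :
    TA lam S' u w (z₁ ⊗ₜ[k] (z₂ ⊗ₜ[k] z₃)) = lam (w * z₃) • (u * (z₂ * S' z₁)) := by
  simp [TA, mul_smul_comm]

/-- term map for `Blemma`: `z₁ ⊗ (z₂ ⊗ z₃) ↦ lam (w * z₃) • (z₁ * (S z₂ * S p))` -/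
noncomputable def TB (lam : H →ₗ[k] k) (p w : H) :
    H ⊗[k] (H ⊗[k] H) →ₗ[k] H :=
  (LinearMap.mul' k H) ∘ₗ
    (LinearMap.lTensor H (LinearMap.mulRight k (S p))) ∘ₗ
    (LinearMap.lTensor H (TensorProduct.rid k H).toLinearMap) ∘ₗ
    (TensorProduct.map LinearMap.id (TensorProduct.map S (lam ∘ₗ LinearMap.mulLeft k w)))

@[simp] lemma TB_tmul (p w z₁ z₂ z₃ : H) :
    TB lam p w (z₁ ⊗ₜ[k] (z₂ ⊗ₜ[k] z₃)) = lam (w * z₃) • (z₁ * (S z₂ * S p)) := by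
  simp [TB, mul_smul_comm, smul_mul_assoc]

/-- identity (A''):  `∑ a₁ • λ(a₂ x) = ∑ λ(a x₂) • S' x₁` -/
lemma Aprime (hlaml : ∀ h : H, swr lam h = lam h • (1 : H))
    (hS'l : ∀ x : H, S' (S x) = x) (hS'r : ∀ x : H, S (S' x) = x)
    {a x : H} (q : Coalgebra.Repr k a (H × H)) (r : Coalgebra.Repr k x (H × H)) :
    ∑ l ∈ q.index, lam (q.right l * x) • q.left l
      = ∑ i ∈ r.index, lam (a * r.right i) • S' (r.left i) := by
  classical
  set c : (i : r.ι) → Coalgebra.Repr k (r.left i) (H × H) := fun i => ℛ k (r.left i) with hc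
  set d : (i : r.ι) → Coalgebra.Repr k (r.right i) (H × H) := fun i => ℛ k (r.right i) with hd
  have hflip := flip_sum (Φ := ∑ l ∈ q.index, TA lam S' (q.left l) (q.right l)) r c d
  simp only [LinearMap.sum_apply, TA_tmul] at hflip
  have evalL : (∑ i ∈ r.index, ∑ j ∈ (c i).index, ∑ l ∈ q.index,
      lam (q.right l * r.right i) • (q.left l * ((c i).right j * S' ((c i).left j))))
      = ∑ l ∈ q.index, lam (q.right l * x) • q.left l := by
    calc ∑ i ∈ r.index, ∑ j ∈ (c i).index, ∑ l ∈ q.index,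
          lam (q.right l * r.right i) • (q.left l * ((c i).right j * S' ((c i).left j)))
        = ∑ i ∈ r.index, ∑ l ∈ q.index,
            lam (q.right l * r.right i) •
              (q.left l * (∑ j ∈ (c i).index, (c i).right j * S' ((c i).left j))) := by
          refine Finset.sum_congr rfl fun i _ => ?_
          rw [Finset.sum_comm]
          refine Finset.sum_congr rfl fun l _ => ?_
          rw [Finset.mul_sum, Finset.smul_sum]
      _ = ∑ i ∈ r.index, ∑ l ∈ q.index,
            (ε (r.left i)) • (lam (q.right l * r.right i) • q.left l) := by
          refine Finset.sum_congr rfl fun i _ => Finset.sum_congr rfl fun l _ => ?_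
          rw [sum_right_mul_S'_left hS'l hS'r (c i), mul_smul_comm, mul_one, smul_comm]
      _ = ∑ l ∈ q.index, ∑ i ∈ r.index,
            (ε (r.left i)) • (lam (q.right l * r.right i) • q.left l) := Finset.sum_comm
      _ = ∑ l ∈ q.index, lam (q.right l * x) • q.left l := by
          refine Finset.sum_congr rfl fun l _ => ?_
          conv_rhs => rw [← sum_counit_smul r]
          rw [Finset.mul_sum, map_sum, Finset.sum_smul]
          refine Finset.sum_congr rfl fun i _ => ?_
          rw [mul_smul_comm, map_smul, smul_smul, smul_eq_mul, ← smul_smul]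
  have evalR : (∑ i ∈ r.index, ∑ j ∈ (d i).index, ∑ l ∈ q.index,
      lam (q.right l * (d i).right j) • (q.left l * ((d i).left j * S' (r.left i))))
      = ∑ i ∈ r.index, lam (a * r.right i) • S' (r.left i) := by
    refine Finset.sum_congr rfl fun i _ => ?_
    calc ∑ j ∈ (d i).index, ∑ l ∈ q.index,
          lam (q.right l * (d i).right j) • (q.left l * ((d i).left j * S' (r.left i)))
        = ∑ l ∈ q.index, ∑ j ∈ (d i).index,
          lam (q.right l * (d i).right j) • ((q.left l * (d i).left j) * S' (r.left i)) := by
          rw [Finset.sum_comm]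
          exact Finset.sum_congr rfl fun l _ => Finset.sum_congr rfl fun j _ => by
            rw [mul_assoc]
      _ = (∑ l ∈ q.index, ∑ j ∈ (d i).index,
          lam (q.right l * (d i).right j) • (q.left l * (d i).left j)) * S' (r.left i) := by
          rw [Finset.sum_mul]
          refine Finset.sum_congr rfl fun l _ => ?_
          rw [Finset.sum_mul]
          exact Finset.sum_congr rfl fun j _ => by rw [smul_mul_assoc]
      _ = (lam (a * r.right i) • (1:H)) * S' (r.left i) := by
          rw [I1₂ (Q := fun l j => q.right l * (d i).right j) hlaml
            (comul_mul_expand q (d i))]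
      _ = lam (a * r.right i) • S' (r.left i) := by rw [smul_mul_assoc, one_mul]
  rw [← evalL, ← evalR]
  exact hflip

/-- identity (B):  `∑ λ(x₂ h) • S x₁ = ∑ λ(x h₂) • h₁` -/
lemma Blemma (hlaml : ∀ h : H, swr lam h = lam h • (1 : H))
    {x h : H} (r : Coalgebra.Repr k x (H × H)) (q : Coalgebra.Repr k h (H × H)) :
    ∑ i ∈ r.index, lam (r.right i * h) • S (r.left i)
      = ∑ l ∈ q.index, lam (x * q.right l) • q.left l := by
  classical
  set c : (l : q.ι) → Coalgebra.Repr k (q.left l) (H × H) := fun l => ℛ k (q.left l) with hc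
  set d : (l : q.ι) → Coalgebra.Repr k (q.right l) (H × H) := fun l => ℛ k (q.right l) with hd
  have hflip := flip_sum (Φ := ∑ i ∈ r.index, TB lam (r.left i) (r.right i)) q c d
  simp only [LinearMap.sum_apply, TB_tmul] at hflip
  have evalL : (∑ l ∈ q.index, ∑ j ∈ (c l).index, ∑ i ∈ r.index,
      lam (r.right i * q.right l) • ((c l).left j * (S ((c l).right j) * S (r.left i))))
      = ∑ i ∈ r.index, lam (r.right i * h) • S (r.left i) := by
    calc ∑ l ∈ q.index, ∑ j ∈ (c l).index, ∑ i ∈ r.index,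
          lam (r.right i * q.right l) • ((c l).left j * (S ((c l).right j) * S (r.left i)))
        = ∑ l ∈ q.index, ∑ i ∈ r.index,
            lam (r.right i * q.right l) •
              ((∑ j ∈ (c l).index, (c l).left j * S ((c l).right j)) * S (r.left i)) := by
          refine Finset.sum_congr rfl fun l _ => ?_
          rw [Finset.sum_comm]
          refine Finset.sum_congr rfl fun i _ => ?_
          rw [Finset.sum_mul, Finset.smul_sum]
          exact Finset.sum_congr rfl fun j _ => by rw [mul_assoc]
      _ = ∑ l ∈ q.index, ∑ i ∈ r.index,
            (ε (q.left l)) • (lam (r.right i * q.right l) • S (r.left i)) := by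
          refine Finset.sum_congr rfl fun l _ => Finset.sum_congr rfl fun i _ => ?_
          rw [HopfAlgebra.sum_mul_antipode_eq_smul (R := k) (c l), smul_mul_assoc, one_mul,
            smul_comm]
      _ = ∑ i ∈ r.index, ∑ l ∈ q.index,
            (ε (q.left l)) • (lam (r.right i * q.right l) • S (r.left i)) := Finset.sum_comm
      _ = ∑ i ∈ r.index, lam (r.right i * h) • S (r.left i) := by
          refine Finset.sum_congr rfl fun i _ => ?_
          conv_rhs => rw [← sum_counit_smul q]
          rw [Finset.mul_sum, map_sum, Finset.sum_smul]
          refine Finset.sum_congr rfl fun l _ => ?_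
          rw [mul_smul_comm, map_smul, smul_smul, smul_eq_mul, ← smul_smul]
  have evalR : (∑ l ∈ q.index, ∑ j ∈ (d l).index, ∑ i ∈ r.index,
      lam (r.right i * (d l).right j) • (q.left l * (S ((d l).left j) * S (r.left i))))
      = ∑ l ∈ q.index, lam (x * q.right l) • q.left l := by
    refine Finset.sum_congr rfl fun l _ => ?_
    calc ∑ j ∈ (d l).index, ∑ i ∈ r.index,
          lam (r.right i * (d l).right j) • (q.left l * (S ((d l).left j) * S (r.left i)))
        = ∑ i ∈ r.index, ∑ j ∈ (d l).index,
          lam (r.right i * (d l).right j) • (q.left l * S (r.left i * (d l).left j)) := by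
          rw [Finset.sum_comm]
          exact Finset.sum_congr rfl fun i _ => Finset.sum_congr rfl fun j _ => by
            rw [S_mul]
      _ = q.left l * ∑ i ∈ r.index, ∑ j ∈ (d l).index,
          lam (r.right i * (d l).right j) • S (r.left i * (d l).left j) := by
          rw [Finset.mul_sum]
          refine Finset.sum_congr rfl fun i _ => ?_
          rw [Finset.mul_sum]
          exact Finset.sum_congr rfl fun j _ => by rw [mul_smul_comm]
      _ = q.left l * (lam (x * q.right l) • (1:H)) := by
          rw [I2₂ (Q := fun i j => r.right i * (d l).right j) hlaml
            (comul_mul_expand r (d l))]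
      _ = lam (x * q.right l) • q.left l := by rw [mul_smul_comm, mul_one]
  rw [← evalL, ← evalR]
  exact hflip

end IntegralSweedler

section Final

variable {lam : H →ₗ[k] k} {S' : H →ₗ[k] H} {χ : H → H}

/-- the `S'`-twisted version of (B) -/
lemma Bprime (hlaml : ∀ h : H, swr lam h = lam h • (1 : H))
    (hS'l : ∀ x : H, S' (S x) = x)
    {x w : H} (r : Coalgebra.Repr k x (H × H)) (q : Coalgebra.Repr k w (H × H)) :
    ∑ i ∈ r.index, lam (r.right i * w) • S' (r.left i)
      = ∑ l ∈ q.index, lam (x * q.right l) • S' (S' (q.left l)) := by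
  have h0 := Blemma hlaml r q
  have h1 := congrArg (S' ∘ₗ S') h0
  rw [map_sum, map_sum] at h1
  calc ∑ i ∈ r.index, lam (r.right i * w) • S' (r.left i)
      = ∑ i ∈ r.index, (S' ∘ₗ S') (lam (r.right i * w) • S (r.left i)) := by
        refine Finset.sum_congr rfl fun i _ => ?_
        rw [map_smul]
        simp only [LinearMap.coe_comp, Function.comp_apply]
        rw [hS'l]
    _ = ∑ l ∈ q.index, (S' ∘ₗ S') (lam (x * q.right l) • q.left l) := h1
    _ = ∑ l ∈ q.index, lam (x * q.right l) • S' (S' (q.left l)) := by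
        refine Finset.sum_congr rfl fun l _ => ?_
        rw [map_smul]
        simp

/-- identity (P'): the pairing data of `Δ (χ w)` -/
lemma Pprime (hlaml : ∀ h : H, swr lam h = lam h • (1 : H))
    (hS'l : ∀ x : H, S' (S x) = x) (hS'r : ∀ x : H, S (S' x) = x)
    (hχ : ∀ x h : H, lam (x * h) = lam (χ h * x))
    (w x : H) (t : Coalgebra.Repr k (χ w) (H × H)) (r : Coalgebra.Repr k w (H × H)) :
    ∑ i ∈ t.index, lam (t.right i * x) • t.left i
      = ∑ l ∈ r.index, lam (χ (r.right l) * x) • S' (S' (r.left l)) := by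
  obtain rx := ℛ k x
  calc ∑ i ∈ t.index, lam (t.right i * x) • t.left i
      = ∑ i ∈ rx.index, lam (χ w * rx.right i) • S' (rx.left i) := Aprime hlaml hS'l hS'r t rx
    _ = ∑ i ∈ rx.index, lam (rx.right i * w) • S' (rx.left i) := by
        refine Finset.sum_congr rfl fun i _ => ?_
        rw [hχ (rx.right i) w]
    _ = ∑ l ∈ r.index, lam (x * r.right l) • S' (S' (r.left l)) := Bprime hlaml hS'l rx r
    _ = ∑ l ∈ r.index, lam (χ (r.right l) * x) • S' (S' (r.left l)) := by
        refine Finset.sum_congr rfl fun l _ => ?_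
        rw [hχ x (r.right l)]

/-- separation in the second tensor factor -/
lemma tensor_sep (hinjl : Function.Injective (fun h : H => lam ∘ₗ LinearMap.mulLeft k h))
    (D : H ⊗[k] H)
    (hD : ∀ x : H,
      (TensorProduct.rid k H) ((LinearMap.lTensor H (lam ∘ₗ LinearMap.mulRight k x)) D) = 0) :
    D = 0 := by
  classical
  obtain ℬ := Module.Basis.ofVectorSpace k H
  obtain ⟨cf, hcf⟩ := TensorProduct.eq_repr_basis_left ℬ D
  have hz : ∀ x : H, ∑ i ∈ cf.support, lam (cf i * x) • (ℬ i : H) = 0 := by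
    intro x
    have h0 := hD x
    rw [← hcf, Finsupp.sum, map_sum, map_sum] at h0
    calc ∑ i ∈ cf.support, lam (cf i * x) • (ℬ i : H)
        = ∑ i ∈ cf.support,
            (TensorProduct.rid k H)
              ((LinearMap.lTensor H (lam ∘ₗ LinearMap.mulRight k x)) ((ℬ i : H) ⊗ₜ[k] cf i)) := by
          refine Finset.sum_congr rfl fun i _ => ?_
          simp
      _ = 0 := h0
  have hcoef : ∀ i ∈ cf.support, ∀ x : H, lam (cf i * x) = 0 := by
    intro i hi x
    have li := ℬ.linearIndependent
    rw [linearIndependent_iff'] at li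
    exact li cf.support (fun i => lam (cf i * x)) (hz x) i hi
  have hcf0 : ∀ i ∈ cf.support, cf i = 0 := by
    intro i hi
    refine sepL hinjl fun x => ?_
    rw [hcoef i hi x, zero_mul, map_zero]
  have : cf = 0 := by
    ext i
    by_cases hi : i ∈ cf.support
    · exact hcf0 i hi
    · exact Finsupp.notMem_support_iff.mp hi
  rw [← hcf, this, Finsupp.sum_zero_index]

/-- element form of `Δ (χ w)` -/
lemma Delta_chi (hlaml : ∀ h : H, swr lam h = lam h • (1 : H))
    (hS'l : ∀ x : H, S' (S x) = x) (hS'r : ∀ x : H, S (S' x) = x)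
    (hinjl : Function.Injective (fun h : H => lam ∘ₗ LinearMap.mulLeft k h))
    (hχ : ∀ x h : H, lam (x * h) = lam (χ h * x))
    (w : H) (r : Coalgebra.Repr k w (H × H)) :
    Δ (χ w) = ∑ l ∈ r.index, S' (S' (r.left l)) ⊗ₜ[k] χ (r.right l) := by
  obtain t := ℛ k (χ w)
  have key : Δ (χ w) - ∑ l ∈ r.index, S' (S' (r.left l)) ⊗ₜ[k] χ (r.right l) = 0 := by
    refine tensor_sep hinjl _ fun x => ?_
    rw [map_sub, map_sub]
    have e1 : (TensorProduct.rid k H)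
        ((LinearMap.lTensor H (lam ∘ₗ LinearMap.mulRight k x)) (Δ (χ w)))
        = ∑ i ∈ t.index, lam (t.right i * x) • t.left i := by
      rw [← t.eq, map_sum, map_sum]
      refine Finset.sum_congr rfl fun i _ => ?_
      simp
    have e2 : (TensorProduct.rid k H)
        ((LinearMap.lTensor H (lam ∘ₗ LinearMap.mulRight k x))
          (∑ l ∈ r.index, S' (S' (r.left l)) ⊗ₜ[k] χ (r.right l)))
        = ∑ l ∈ r.index, lam (χ (r.right l) * x) • S' (S' (r.left l)) := by
      rw [map_sum, map_sum]
      refine Finset.sum_congr rfl fun l _ => ?_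
      simp
    rw [e1, e2, Pprime hlaml hS'l hS'r hχ w x t r, sub_self]
  have := sub_eq_zero.mp key
  exact this

/-- the explicit form of `χ` -/
lemma chiFORM (hlaml : ∀ h : H, swr lam h = lam h • (1 : H))
    (hS'l : ∀ x : H, S' (S x) = x) (hS'r : ∀ x : H, S (S' x) = x)
    (hinjl : Function.Injective (fun h : H => lam ∘ₗ LinearMap.mulLeft k h))
    (hχ : ∀ x h : H, lam (x * h) = lam (χ h * x))
    (w : H) (r : Coalgebra.Repr k w (H × H)) :
    χ w = ∑ l ∈ r.index, ε (χ (r.right l)) • S' (S' (r.left l)) := by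
  have h := Delta_chi hlaml hS'l hS'r hinjl hχ w r
  have h2 := congrArg (fun z => (TensorProduct.rid k H) ((LinearMap.lTensor H ε) z)) h
  simp only [map_sum] at h2
  calc χ w = (TensorProduct.rid k H) ((LinearMap.lTensor H ε) (Δ (χ w))) := by
        rw [Coalgebra.lTensor_counit_comul]; simp
    _ = ∑ l ∈ r.index,
        (TensorProduct.rid k H) ((LinearMap.lTensor H ε) (S' (S' (r.left l)) ⊗ₜ[k] χ (r.right l))) := h2
    _ = ∑ l ∈ r.index, ε (χ (r.right l)) • S' (S' (r.left l)) := by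
        refine Finset.sum_congr rfl fun l _ => ?_
        simp

end Final

section Alpha

variable {lam : H →ₗ[k] k} {χ : H → H}

lemma alphaS2 (hinjl : Function.Injective (fun h : H => lam ∘ₗ LinearMap.mulLeft k h))
    (hχ : ∀ x h : H, lam (x * h) = lam (χ h * x)) (h : H) :
    ε (χ (S (S h))) = ε (χ h) := by
  classical
  obtain ⟨χₗ, hχₗ⟩ := exists_chiL hinjl hχ
  obtain r := ℛ k h
  set c : (i : r.ι) → Coalgebra.Repr k (r.left i) (H × H) := fun i => ℛ k (r.left i) with hc
  set d : (i : r.ι) → Coalgebra.Repr k (r.right i) (H × H) := fun i => ℛ k (r.right i) with hd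
  set αl : H →ₗ[k] k := (Coalgebra.counit (R := k) (A := H)) ∘ₗ χₗ with hαl
  have hα : ∀ u : H, αl u = ε (χ u) := by
    intro u; rw [hαl]; simp [hχₗ]
  have hflip := flip_sum (Φ := (LinearMap.mul' k k) ∘ₗ
      (TensorProduct.map αl ((LinearMap.mul' k k) ∘ₗ
        (TensorProduct.map (αl ∘ₗ S) (αl ∘ₗ S ∘ₗ S))))) r c d
  simp only [LinearMap.coe_comp, Function.comp_apply, TensorProduct.map_tmul,
    LinearMap.mul'_apply] at hflip
  have evalL : (∑ i ∈ r.index, ∑ j ∈ (c i).index,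
      αl ((c i).left j) * (αl (S ((c i).right j)) * αl (S (S (r.right i)))))
      = ε (χ (S (S h))) := by
    calc ∑ i ∈ r.index, ∑ j ∈ (c i).index,
          αl ((c i).left j) * (αl (S ((c i).right j)) * αl (S (S (r.right i))))
        = ∑ i ∈ r.index,
            (∑ j ∈ (c i).index, αl ((c i).left j * S ((c i).right j))) *
              αl (S (S (r.right i))) := by
          refine Finset.sum_congr rfl fun i _ => ?_
          rw [Finset.sum_mul]
          refine Finset.sum_congr rfl fun j _ => ?_
          rw [hα, hα, hα, hα, ← mul_assoc, ← Bialgebra.counit_mul,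
            ← chi_mul hinjl hχ]
      _ = ∑ i ∈ r.index, ε (r.left i) * αl (S (S (r.right i))) := by
          refine Finset.sum_congr rfl fun i _ => ?_
          congr 1
          rw [← map_sum, HopfAlgebra.sum_mul_antipode_eq_smul (R := k) (c i), map_smul, hα,
            chi_one hinjl hχ]
          simp [smul_eq_mul]
      _ = ε (χ (S (S h))) := by
          rw [← hα]
          calc ∑ i ∈ r.index, ε (r.left i) * αl (S (S (r.right i)))
              = ∑ i ∈ r.index, αl (ε (r.left i) • S (S (r.right i))) := by
                refine Finset.sum_congr rfl fun i _ => ?_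
                rw [map_smul, smul_eq_mul]
            _ = αl (∑ i ∈ r.index, ε (r.left i) • S (S (r.right i))) := (map_sum _ _ _).symm
            _ = αl (S (S h)) := by
                congr 1
                calc ∑ i ∈ r.index, ε (r.left i) • S (S (r.right i))
                    = S (S (∑ i ∈ r.index, ε (r.left i) • r.right i)) := by
                      rw [map_sum, map_sum]
                      exact Finset.sum_congr rfl fun i _ => by rw [map_smul, map_smul]
                  _ = S (S h) := by rw [sum_counit_smul]
  have evalR : (∑ i ∈ r.index, ∑ j ∈ (d i).index,
      αl (r.left i) * (αl (S ((d i).left j)) * αl (S (S ((d i).right j)))))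
      = ε (χ h) := by
    calc ∑ i ∈ r.index, ∑ j ∈ (d i).index,
          αl (r.left i) * (αl (S ((d i).left j)) * αl (S (S ((d i).right j))))
        = ∑ i ∈ r.index, αl (r.left i) *
            (∑ j ∈ (d i).index, αl (S ((d i).left j * S ((d i).right j)))) := by
          refine Finset.sum_congr rfl fun i _ => ?_
          rw [Finset.mul_sum]
          refine Finset.sum_congr rfl fun j _ => ?_
          congr 1
          rw [hα, hα, hα, mul_comm, ← Bialgebra.counit_mul, ← chi_mul hinjl hχ, S_mul]
      _ = ∑ i ∈ r.index, αl (r.left i) * ε (r.right i) := by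
          refine Finset.sum_congr rfl fun i _ => ?_
          congr 1
          rw [← map_sum, ← map_sum, HopfAlgebra.sum_mul_antipode_eq_smul (R := k) (d i),
            map_smul, map_smul, S_one, hα, chi_one hinjl hχ]
          simp [smul_eq_mul]
      _ = ε (χ h) := by
          rw [← hα]
          calc ∑ i ∈ r.index, αl (r.left i) * ε (r.right i)
              = ∑ i ∈ r.index, αl (ε (r.right i) • r.left i) := by
                refine Finset.sum_congr rfl fun i _ => ?_
                rw [map_smul, smul_eq_mul, mul_comm]
            _ = αl (∑ i ∈ r.index, ε (r.right i) • r.left i) := (map_sum _ _ _).symm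
            _ = αl h := by rw [sum_smul_counit r]
  rw [← evalL, ← evalR]
  exact hflip

end Alpha

end S9

/-- `H` Hopf algebra over `k` with bijective antipode `S` (linear inverse
`S'`), `λ ≠ 0` a left integral for `H` in `H⁎`, and `Λ := λ ∘ S⁻¹`.  Assume `h ↦ λ ↼ h`
and `h ↦ h ⇀ Λ` are injective.  If `χ` satisfies `λ(x·h) = λ(χ(h)·x)` and `Ω` satisfies
`Λ(h·x) = Λ(x·Ω(h))`, then `Ω = S⁻¹ ∘ χ ∘ S = S ∘ χ ∘ S⁻¹` and `ε ∘ Ω = (ε ∘ χ) ∘ S`. -/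
theorem statement9
    (S' : H →ₗ[k] H)
    (hS'l : ∀ x : H, S' (HopfAlgebra.antipode (R := k) x) = x)
    (hS'r : ∀ x : H, HopfAlgebra.antipode (R := k) (S' x) = x)
    (lam : H →ₗ[k] k) (hlam0 : lam ≠ 0)
    (hlaml : ∀ h : H, swr lam h = lam h • (1 : H))
    (hinjl : Function.Injective (fun h : H => lam ∘ₗ LinearMap.mulLeft k h))
    (hinjr : Function.Injective (fun h : H => (lam ∘ₗ S') ∘ₗ LinearMap.mulRight k h))
    (χ Ω : H → H)
    (hχ : ∀ x h : H, lam (x * h) = lam (χ h * x))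
    (hΩ : ∀ x h : H, (lam ∘ₗ S') (h * x) = (lam ∘ₗ S') (x * Ω h)) :
    (∀ h : H, Ω h = S' (χ (HopfAlgebra.antipode (R := k) h))) ∧
    (∀ h : H, Ω h = HopfAlgebra.antipode (R := k) (χ (S' h))) ∧
    (∀ h : H, Coalgebra.counit (R := k) (Ω h) =
      Coalgebra.counit (R := k) (χ (HopfAlgebra.antipode (R := k) h))) := by
  have hΩ' : ∀ x h : H, lam (S' (h * x)) = lam (S' (x * Ω h)) := fun x h => by
    have h0 := hΩ x h
    simpa using h0
  have b2 : ∀ h : H, Ω h = HopfAlgebra.antipode (R := k) (χ (S' h)) := by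
    intro h
    refine S9.sepR hinjr fun x => ?_
    calc lam (S' (x * Ω h)) = lam (S' (h * x)) := (hΩ' x h).symm
      _ = lam (S' x * S' h) := by rw [S9.S'_mul hS'l hS'r]
      _ = lam (χ (S' h) * S' x) := hχ (S' x) (S' h)
      _ = lam (S' (HopfAlgebra.antipode (R := k) (χ (S' h))) * S' x) := by rw [hS'l]
      _ = lam (S' (x * HopfAlgebra.antipode (R := k) (χ (S' h)))) := by
          rw [← S9.S'_mul hS'l hS'r]
  have hαS : ∀ u : H,
      Coalgebra.counit (R := k) (χ (S' u)) =
        Coalgebra.counit (R := k) (χ (HopfAlgebra.antipode (R := k) u)) := by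
    intro u
    have h2 := S9.alphaS2 hinjl hχ (S' u)
    calc Coalgebra.counit (R := k) (χ (S' u))
        = Coalgebra.counit (R := k)
            (χ (HopfAlgebra.antipode (R := k)
              (HopfAlgebra.antipode (R := k) (S' u)))) := h2.symm
      _ = Coalgebra.counit (R := k) (χ (HopfAlgebra.antipode (R := k) u)) := by rw [hS'r]
  refine ⟨?_, b2, ?_⟩
  · intro h
    rw [b2 h]
    obtain r := ℛ k h
    have eq1 : Coalgebra.comul (R := k) (S' h)
        = ∑ i ∈ r.index, S' (r.right i) ⊗ₜ[k] S' (r.left i) :=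
      S9.comul_S'_repr hS'l hS'r r
    have eq2 : Coalgebra.comul (R := k) (HopfAlgebra.antipode (R := k) h)
        = ∑ i ∈ r.index,
            HopfAlgebra.antipode (R := k) (r.right i) ⊗ₜ[k]
              HopfAlgebra.antipode (R := k) (r.left i) :=
      S9.comul_S_repr r
    have f1 := S9.chiFORM hlaml hS'l hS'r hinjl hχ (S' h)
      ⟨r.index, fun i => S' (r.right i), fun i => S' (r.left i), eq1.symm⟩
    have f2 := S9.chiFORM hlaml hS'l hS'r hinjl hχ (HopfAlgebra.antipode (R := k) h)
      ⟨r.index, fun i => HopfAlgebra.antipode (R := k) (r.right i),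
        fun i => HopfAlgebra.antipode (R := k) (r.left i), eq2.symm⟩
    rw [f1, f2, map_sum, map_sum]
    refine Finset.sum_congr rfl fun i _ => ?_
    rw [map_smul, map_smul]
    congr 1
    · exact hαS (r.left i)
    · show HopfAlgebra.antipode (R := k) (S' (S' (S' (r.right i))))
        = S' (S' (S' (HopfAlgebra.antipode (R := k) (r.right i))))
      rw [hS'r, hS'l]
  · intro h
    rw [b2 h, S9.counit_S]
    exact hαS h
end

section
/- (Radford's S⁴ formula for co-Frobenius Hopf algebras.) Let H be a Hopf algebra over a field k with bijective antipode S, and let λ : H → k be a nonzero left integral for H in H⁎. Assume the map H → H⁎, h ↦ λ ↼ h, is injective. Let χ : H → H be a bijective algebra homomorphism satisfying λ(x·h) = λ(χ(h)·x) for all x, h ∈ H, set α := ε ∘ χ (the distinguished grouplike element of H⁎), and let g ∈ H be a grouplike element satisfying λ(h₁)·h₂ = λ(h)·S(g) for all h ∈ H (the distinguished grouplike element of H). Then for every h ∈ H, S⁴(h) = g·(α ⇀ h ↼ α⁻¹)·g⁻¹; explicitly, S⁴(h) = α(S(h₁))·α(h₃)·g·h₂·S(g). -/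
/-!
Helper definitions for Sweedler-notation expressions in a Hopf algebra `H` over a field `k`.
-/

open TensorProduct

variable {k H : Type*} [Field k] [Ring H] [HopfAlgebra k H]

namespace Radford

open Coalgebra HopfAlgebra LinearMap

lemma sum_counit_smul_left {a : H} {ι : Type*} (r : Coalgebra.Repr k a ι) :
    ∑ i ∈ r.index, Coalgebra.counit (R := k) (r.right i) • r.left i = a := by
  have h := congrArg (TensorProduct.rid k H) (Coalgebra.sum_tmul_counit_eq r)
  rw [map_sum] at h
  simpa using h

lemma sum_counit_smul_right {a : H} {ι : Type*} (r : Coalgebra.Repr k a ι) :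
    ∑ i ∈ r.index, Coalgebra.counit (R := k) (r.left i) • r.right i = a := by
  have h := congrArg (TensorProduct.lid k H) (Coalgebra.sum_counit_tmul_eq r)
  rw [map_sum] at h
  simpa using h

lemma swr_repr (f : H →ₗ[k] k) {a : H} {ι : Type*} (r : Coalgebra.Repr k a ι) :
    swr f a = ∑ i ∈ r.index, f (r.right i) • r.left i := by
  simp only [swr, LinearMap.comp_apply, ← r.eq, map_sum, LinearMap.lTensor_tmul]
  simp

lemma swl_repr (f : H →ₗ[k] k) {a : H} {ι : Type*} (r : Coalgebra.Repr k a ι) :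
    swl f a = ∑ i ∈ r.index, f (r.left i) • r.right i := by
  simp only [swl, LinearMap.comp_apply, ← r.eq, map_sum, LinearMap.rTensor_tmul]
  simp

lemma sw2_repr (f g : H →ₗ[k] H) {a : H} {ι : Type*} (r : Coalgebra.Repr k a ι) :
    sw2 f g a = ∑ i ∈ r.index, f (r.left i) * g (r.right i) := by
  simp only [sw2, LinearMap.comp_apply, ← r.eq, map_sum, TensorProduct.map_tmul]
  simp

lemma sw3_repr (f g e : H →ₗ[k] H) {a : H} {ι : Type*} (r : Coalgebra.Repr k a ι)
    {κ : Type*} (rl : ∀ i, Coalgebra.Repr k (r.left i) κ) :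
    sw3 f g e a = ∑ i ∈ r.index, ∑ j ∈ (rl i).index,
      f ((rl i).left j) * g ((rl i).right j) * e (r.right i) := by
  simp only [sw3, comul3, LinearMap.comp_apply, ← r.eq, map_sum, LinearMap.rTensor_tmul]
  rw [Finset.sum_congr rfl (fun i _ => by rw [← (rl i).eq])]
  simp [TensorProduct.sum_tmul, TensorProduct.map_tmul]

/-- product representation -/
noncomputable def reprMul {a b : H} {ι κ : Type*} (ra : Coalgebra.Repr k a ι) (rb : Coalgebra.Repr k b κ) :
    Coalgebra.Repr k (a * b) (ι × κ) where
  index := ra.index ×ˢ rb.index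
  left := fun p => ra.left p.1 * rb.left p.2
  right := fun p => ra.right p.1 * rb.right p.2
  eq := by
    rw [Finset.sum_product]
    rw [Bialgebra.comul_mul, ← ra.eq, ← rb.eq, Finset.sum_mul_sum]
    simp [Algebra.TensorProduct.tmul_mul_tmul]

@[simp] lemma reprMul_index {a b : H} {ι κ : Type*} (ra : Coalgebra.Repr k a ι) (rb : Coalgebra.Repr k b κ) :
    (reprMul ra rb).index = ra.index ×ˢ rb.index := rfl

@[simp] lemma reprMul_left {a b : H} {ι κ : Type*} (ra : Coalgebra.Repr k a ι) (rb : Coalgebra.Repr k b κ) (p) :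
    (reprMul ra rb).left p = ra.left p.1 * rb.left p.2 := rfl

@[simp] lemma reprMul_right {a b : H} {ι κ : Type*} (ra : Coalgebra.Repr k a ι) (rb : Coalgebra.Repr k b κ) (p) :
    (reprMul ra rb).right p = ra.right p.1 * rb.right p.2 := rfl

lemma M3 (f g e : H →ₗ[k] H) {a : H} {ι : Type*} (r : Coalgebra.Repr k a ι)
    {κ : Type*} (rl : ∀ i, Coalgebra.Repr k (r.left i) κ) {κ' : Type*} (rr : ∀ i, Coalgebra.Repr k (r.right i) κ') :
    ∑ i ∈ r.index, ∑ j ∈ (rl i).index,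
      f ((rl i).left j) * g ((rl i).right j) * e (r.right i)
    = ∑ i ∈ r.index, ∑ j ∈ (rr i).index,
      f (r.left i) * g ((rr i).left j) * e ((rr i).right j) := by
  have h := Coalgebra.sum_map_tmul_tmul_eq (R := k) f g e a (repr := r) (a₁ := rl) (a₂ := rr)
  apply_fun (LinearMap.mul' k H ∘ₗ LinearMap.lTensor H (LinearMap.mul' k H)) at h
  simpa [map_sum, mul_assoc] using h.symm

lemma CT1 (Φ : H →ₗ[k] H) {a : H} {ι : Type*} (r : Coalgebra.Repr k a ι)
    {κ : Type*} (rl : ∀ i, Coalgebra.Repr k (r.left i) κ) :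
    ∑ i ∈ r.index, ∑ j ∈ (rl i).index,
      HopfAlgebra.antipode (R := k) ((rl i).left j) * ((rl i).right j * Φ (r.right i))
    = Φ a := by
  have step : ∀ i ∈ r.index, (∑ j ∈ (rl i).index,
      HopfAlgebra.antipode (R := k) ((rl i).left j) * ((rl i).right j * Φ (r.right i)))
      = Coalgebra.counit (R := k) (r.left i) • Φ (r.right i) := by
    intro i _
    simp_rw [← mul_assoc, ← Finset.sum_mul]
    rw [HopfAlgebra.sum_antipode_mul_eq_algebraMap_counit (rl i), ← Algebra.smul_def]
  rw [Finset.sum_congr rfl step]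
  simp_rw [← map_smul, ← map_sum, sum_counit_smul_right r]

lemma CT2 (Φ : H →ₗ[k] H) {a : H} {ι : Type*} (r : Coalgebra.Repr k a ι)
    {κ' : Type*} (rr : ∀ i, Coalgebra.Repr k (r.right i) κ') :
    ∑ i ∈ r.index, ∑ j ∈ (rr i).index,
      Φ (r.left i) * ((rr i).left j * HopfAlgebra.antipode (R := k) ((rr i).right j))
    = Φ a := by
  have step : ∀ i ∈ r.index, (∑ j ∈ (rr i).index,
      Φ (r.left i) * ((rr i).left j * HopfAlgebra.antipode (R := k) ((rr i).right j)))
      = Coalgebra.counit (R := k) (r.right i) • Φ (r.left i) := by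
    intro i _
    rw [← Finset.mul_sum, HopfAlgebra.sum_mul_antipode_eq_algebraMap_counit (rr i), ← Algebra.commutes,
      ← Algebra.smul_def]
  rw [Finset.sum_congr rfl step]
  simp_rw [← map_smul, ← map_sum, sum_counit_smul_left r]

lemma CTA (A : H →ₗ[k] k) (hA : A 1 = 1) (Φ : H →ₗ[k] H) {a : H} {ι : Type*} (r : Coalgebra.Repr k a ι)
    {κ : Type*} (rl : ∀ i, Coalgebra.Repr k (r.left i) κ) :
    ∑ i ∈ r.index, ∑ j ∈ (rl i).index,
      A (HopfAlgebra.antipode (R := k) ((rl i).left j) * (rl i).right j) • Φ (r.right i)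
    = Φ a := by
  have step : ∀ i ∈ r.index, (∑ j ∈ (rl i).index,
      A (HopfAlgebra.antipode (R := k) ((rl i).left j) * (rl i).right j) • Φ (r.right i))
      = Coalgebra.counit (R := k) (r.left i) • Φ (r.right i) := by
    intro i _
    rw [← Finset.sum_smul, ← map_sum, HopfAlgebra.sum_antipode_mul_eq_algebraMap_counit (rl i),
      Algebra.algebraMap_eq_smul_one, map_smul, hA, smul_eq_mul, mul_one]
  rw [Finset.sum_congr rfl step]
  simp_rw [← map_smul, ← map_sum, sum_counit_smul_right r]


lemma counit_antipode (a : H) :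
    Coalgebra.counit (R := k) (HopfAlgebra.antipode (R := k) a)
      = Coalgebra.counit (R := k) a := by
  have h := congrArg (Coalgebra.counit (R := k)) (HopfAlgebra.sum_antipode_mul_eq_algebraMap_counit (ℛ k a))
  rw [map_sum, Bialgebra.counit_algebraMap] at h
  simp_rw [Bialgebra.counit_mul] at h
  calc Coalgebra.counit (R := k) (HopfAlgebra.antipode (R := k) a)
      = Coalgebra.counit (R := k) (HopfAlgebra.antipode (R := k)
          (∑ i ∈ (ℛ k a).index,
            Coalgebra.counit (R := k) ((ℛ k a).right i) • (ℛ k a).left i)) := by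
        rw [sum_counit_smul_left (ℛ k a)]
    _ = ∑ i ∈ (ℛ k a).index,
          Coalgebra.counit (R := k) (HopfAlgebra.antipode (R := k) ((ℛ k a).left i)) *
            Coalgebra.counit (R := k) ((ℛ k a).right i) := by
        rw [map_sum, map_sum]
        exact Finset.sum_congr rfl fun i _ => by
          simp only [map_smul, smul_eq_mul]
          exact mul_comm _ _
    _ = Coalgebra.counit (R := k) a := h

lemma antipode_one : HopfAlgebra.antipode (R := k) (1 : H) = 1 := by
  have h := HopfAlgebra.mul_antipode_rTensor_comul_apply (R := k) (1 : H)
  rw [show Coalgebra.comul (R := k) (1 : H) = 1 from map_one (Bialgebra.comulAlgHom k H),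
    Algebra.TensorProduct.one_def] at h
  simpa using h

lemma antipode_mul (a b : H) :
    HopfAlgebra.antipode (R := k) (a * b)
      = HopfAlgebra.antipode (R := k) b * HopfAlgebra.antipode (R := k) a := by
  classical
  set aS : H →ₗ[k] H := HopfAlgebra.antipode (R := k) (A := H) with haS
  set ra := ℛ k a with hra
  set rb := ℛ k b with hrb
  set rA : (i : H × H) → Coalgebra.Repr k (ra.right i) (H × H) := fun i => ℛ k (ra.right i) with hrA
  set rB : (m : H × H) → Coalgebra.Repr k (rb.right m) (H × H) := fun m => ℛ k (rb.right m) with hrB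
  set rAL : (i : H × H) → Coalgebra.Repr k (ra.left i) (H × H) := fun i => ℛ k (ra.left i) with hrAL
  set rBL : (m : H × H) → Coalgebra.Repr k (rb.left m) (H × H) := fun m => ℛ k (rb.left m) with hrBL
  have expand : ∀ (i : H × H) (m : H × H),
      (∑ p ∈ (reprMul (rA i) (rB m)).index,
        (reprMul (rA i) (rB m)).left p * aS ((reprMul (rA i) (rB m)).right p))
      = ∑ j ∈ (rA i).index, ∑ n ∈ (rB m).index,
          ((rA i).left j * (rB m).left n) * aS ((rA i).right j * (rB m).right n) :=
    fun i m => Finset.sum_product _ _ _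
  have step1 : aS b * aS a
      = ∑ i ∈ ra.index, ∑ m ∈ rb.index,
          aS (rb.left m) * aS (ra.left i) *
            (∑ p ∈ (reprMul (rA i) (rB m)).index,
              (reprMul (rA i) (rB m)).left p * aS ((reprMul (rA i) (rB m)).right p)) := by
    have hb : aS b = ∑ m ∈ rb.index,
        Coalgebra.counit (R := k) (rb.right m) • aS (rb.left m) := by
      conv_lhs => rw [← sum_counit_smul_left rb]
      rw [map_sum]; simp_rw [map_smul]
    have ha' : aS a = ∑ i ∈ ra.index,
        Coalgebra.counit (R := k) (ra.right i) • aS (ra.left i) := by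
      conv_lhs => rw [← sum_counit_smul_left ra]
      rw [map_sum]; simp_rw [map_smul]
    rw [hb, ha', Finset.sum_mul_sum, Finset.sum_comm]
    refine Finset.sum_congr rfl fun i _ => Finset.sum_congr rfl fun m _ => ?_
    rw [HopfAlgebra.sum_mul_antipode_eq_algebraMap_counit (reprMul (rA i) (rB m)), Bialgebra.counit_mul,
      ← Algebra.commutes, ← Algebra.smul_def, smul_mul_assoc, mul_smul_comm, smul_smul,
      mul_comm (Coalgebra.counit (R := k) (rb.right m))]
  have step2 : (∑ i ∈ ra.index, ∑ m ∈ rb.index,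
          aS (rb.left m) * aS (ra.left i) *
            (∑ p ∈ (reprMul (rA i) (rB m)).index,
              (reprMul (rA i) (rB m)).left p * aS ((reprMul (rA i) (rB m)).right p)))
      = ∑ m ∈ rb.index, ∑ n ∈ (rB m).index, ∑ i ∈ ra.index, ∑ j ∈ (rA i).index,
          aS (rb.left m) * (aS (ra.left i) * ((rA i).left j *
            ((rB m).left n * aS ((rA i).right j * (rB m).right n)))) := by
    calc (∑ i ∈ ra.index, ∑ m ∈ rb.index,
          aS (rb.left m) * aS (ra.left i) *
            (∑ p ∈ (reprMul (rA i) (rB m)).index,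
              (reprMul (rA i) (rB m)).left p * aS ((reprMul (rA i) (rB m)).right p)))
        = ∑ i ∈ ra.index, ∑ m ∈ rb.index, ∑ j ∈ (rA i).index, ∑ n ∈ (rB m).index,
            aS (rb.left m) * (aS (ra.left i) * ((rA i).left j *
              ((rB m).left n * aS ((rA i).right j * (rB m).right n)))) := by
          refine Finset.sum_congr rfl fun i _ => Finset.sum_congr rfl fun m _ => ?_
          rw [expand i m, Finset.mul_sum]
          refine Finset.sum_congr rfl fun j _ => ?_
          rw [Finset.mul_sum]
          exact Finset.sum_congr rfl fun n _ => by simp only [mul_assoc]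
      _ = ∑ m ∈ rb.index, ∑ i ∈ ra.index, ∑ j ∈ (rA i).index, ∑ n ∈ (rB m).index,
            aS (rb.left m) * (aS (ra.left i) * ((rA i).left j *
              ((rB m).left n * aS ((rA i).right j * (rB m).right n)))) := Finset.sum_comm
      _ = ∑ m ∈ rb.index, ∑ i ∈ ra.index, ∑ n ∈ (rB m).index, ∑ j ∈ (rA i).index,
            aS (rb.left m) * (aS (ra.left i) * ((rA i).left j *
              ((rB m).left n * aS ((rA i).right j * (rB m).right n)))) :=
          Finset.sum_congr rfl fun m _ => Finset.sum_congr rfl fun i _ => Finset.sum_comm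
      _ = ∑ m ∈ rb.index, ∑ n ∈ (rB m).index, ∑ i ∈ ra.index, ∑ j ∈ (rA i).index,
            aS (rb.left m) * (aS (ra.left i) * ((rA i).left j *
              ((rB m).left n * aS ((rA i).right j * (rB m).right n)))) :=
          Finset.sum_congr rfl fun m _ => Finset.sum_comm
  have step3 : ∀ m, ∀ n,
      (∑ i ∈ ra.index, ∑ j ∈ (rA i).index,
        aS (ra.left i) * ((rA i).left j *
          ((rB m).left n * aS ((rA i).right j * (rB m).right n))))
      = (rB m).left n * aS (a * (rB m).right n) := by
    intro m n
    set Φ : H →ₗ[k] H := LinearMap.mulLeft k ((rB m).left n) ∘ₗ aS ∘ₗ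
      LinearMap.mulRight k ((rB m).right n) with hΦ
    have hΦ' : ∀ z : H, Φ z = (rB m).left n * aS (z * (rB m).right n) := fun z => rfl
    calc (∑ i ∈ ra.index, ∑ j ∈ (rA i).index,
          aS (ra.left i) * ((rA i).left j *
            ((rB m).left n * aS ((rA i).right j * (rB m).right n))))
        = ∑ i ∈ ra.index, ∑ j ∈ (rA i).index,
            aS (ra.left i) * (LinearMap.id ((rA i).left j) : H) * Φ ((rA i).right j) := by
          refine Finset.sum_congr rfl fun i _ => Finset.sum_congr rfl fun j _ => ?_
          simp only [hΦ', LinearMap.id_coe, id_eq, mul_assoc]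
      _ = ∑ i ∈ ra.index, ∑ j ∈ (rAL i).index,
            aS ((rAL i).left j) * (LinearMap.id ((rAL i).right j) : H) * Φ (ra.right i) :=
          (M3 aS LinearMap.id Φ ra rAL rA).symm
      _ = Φ a := by
          simp only [LinearMap.id_coe, id_eq, mul_assoc]
          exact CT1 Φ ra rAL
      _ = (rB m).left n * aS (a * (rB m).right n) := hΦ' a
  have step4 : (∑ m ∈ rb.index, ∑ n ∈ (rB m).index, ∑ i ∈ ra.index, ∑ j ∈ (rA i).index,
          aS (rb.left m) * (aS (ra.left i) * ((rA i).left j *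
            ((rB m).left n * aS ((rA i).right j * (rB m).right n)))))
      = aS (a * b) := by
    have collapse : ∀ m ∈ rb.index, ∀ n ∈ (rB m).index,
        (∑ i ∈ ra.index, ∑ j ∈ (rA i).index,
          aS (rb.left m) * (aS (ra.left i) * ((rA i).left j *
            ((rB m).left n * aS ((rA i).right j * (rB m).right n)))))
        = aS (rb.left m) * ((rB m).left n * aS (a * (rB m).right n)) := by
      intro m _ n _
      rw [← step3 m n]
      simp only [Finset.mul_sum]
    rw [Finset.sum_congr rfl (fun m hm => Finset.sum_congr rfl (collapse m hm))]
    set Ψ : H →ₗ[k] H := aS ∘ₗ LinearMap.mulLeft k a with hΨ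
    have hΨ' : ∀ z : H, Ψ z = aS (a * z) := fun z => rfl
    calc (∑ m ∈ rb.index, ∑ n ∈ (rB m).index,
          aS (rb.left m) * ((rB m).left n * aS (a * (rB m).right n)))
        = ∑ m ∈ rb.index, ∑ n ∈ (rB m).index,
            aS (rb.left m) * (LinearMap.id ((rB m).left n) : H) * Ψ ((rB m).right n) := by
          refine Finset.sum_congr rfl fun m _ => Finset.sum_congr rfl fun n _ => ?_
          simp only [hΨ', LinearMap.id_coe, id_eq, mul_assoc]
      _ = ∑ m ∈ rb.index, ∑ n ∈ (rBL m).index,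
            aS ((rBL m).left n) * (LinearMap.id ((rBL m).right n) : H) * Ψ (rb.right m) :=
          (M3 aS LinearMap.id Ψ rb rBL rB).symm
      _ = Ψ b := by
          simp only [LinearMap.id_coe, id_eq, mul_assoc]
          exact CT1 Ψ rb rBL
      _ = aS (a * b) := hΨ' b
  exact (step1.trans (step2.trans step4)).symm



section Grouplike
variable {g : H} (hg : Coalgebra.comul (R := k) g = g ⊗ₜ[k] g)
  (hgε : Coalgebra.counit (R := k) g = 1)

include hg hgε in
lemma antipode_g_mul_g : HopfAlgebra.antipode (R := k) g * g = 1 := by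
  have h := HopfAlgebra.mul_antipode_rTensor_comul_apply (R := k) g
  rw [hg, hgε] at h
  simpa using h

include hg hgε in
lemma g_mul_antipode_g : g * HopfAlgebra.antipode (R := k) g = 1 := by
  have h := HopfAlgebra.mul_antipode_lTensor_comul_apply (R := k) g
  rw [hg, hgε] at h
  simpa using h

include hg hgε in
lemma antipode_antipode_g :
    HopfAlgebra.antipode (R := k) (HopfAlgebra.antipode (R := k) g) = g := by
  have h1 : g * HopfAlgebra.antipode (R := k) g = 1 := g_mul_antipode_g hg hgε
  have h2 : HopfAlgebra.antipode (R := k) g *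
      HopfAlgebra.antipode (R := k) (HopfAlgebra.antipode (R := k) g) = 1 := by
    rw [← antipode_mul, antipode_g_mul_g hg hgε, antipode_one]
  exact (left_inv_eq_right_inv h1 h2).symm

end Grouplike

section Integral
variable (lam : H →ₗ[k] k)

lemma integral_repr (hlaml : ∀ h : H, swr lam h = lam h • (1 : H))
    {a : H} {ι : Type*} (r : Coalgebra.Repr k a ι) :
    ∑ i ∈ r.index, lam (r.right i) • r.left i = lam a • 1 := by
  rw [← swr_repr lam r]; exact hlaml a

lemma glam_repr {g : H} (hglam : ∀ h : H, swl lam h = lam h • HopfAlgebra.antipode (R := k) g)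
    {a : H} {ι : Type*} (r : Coalgebra.Repr k a ι) :
    ∑ i ∈ r.index, lam (r.left i) • r.right i
      = lam a • HopfAlgebra.antipode (R := k) g := by
  rw [← swl_repr lam r]; exact hglam a

/-- L1 : `x₁ λ(c x₂) = S(c₁) λ(c₂ x)`. -/
lemma L1 (hlaml : ∀ h : H, swr lam h = lam h • (1 : H)) (c x : H) :
    swr (lam ∘ₗ LinearMap.mulLeft k c) x
      = sw2 (HopfAlgebra.antipode (R := k))
          ((Algebra.linearMap k H) ∘ₗ lam ∘ₗ LinearMap.mulRight k x) c := by
  classical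
  set aS : H →ₗ[k] H := HopfAlgebra.antipode (R := k) (A := H) with haS
  set rc := ℛ k c with hrc
  set rx := ℛ k x with hrx
  set rcr : (i : H × H) → Coalgebra.Repr k (rc.right i) (H × H) := fun i => ℛ k (rc.right i) with hrcr
  set rcl : (i : H × H) → Coalgebra.Repr k (rc.left i) (H × H) := fun i => ℛ k (rc.left i) with hrcl
  -- E := ∑ i j m, lam (c₃ x₂) • (S c₁ * (c₂ * x₁))
  have wayA :
      (∑ i ∈ rc.index, ∑ j ∈ (rcr i).index, ∑ m ∈ rx.index,
        lam ((rcr i).right j * rx.right m) • (aS (rc.left i) * ((rcr i).left j * rx.left m)))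
      = sw2 (HopfAlgebra.antipode (R := k))
          ((Algebra.linearMap k H) ∘ₗ lam ∘ₗ LinearMap.mulRight k x) c := by
    rw [sw2_repr _ _ rc]
    refine Finset.sum_congr rfl fun i _ => ?_
    have inner : (∑ j ∈ (rcr i).index, ∑ m ∈ rx.index,
        lam ((rcr i).right j * rx.right m) • ((rcr i).left j * rx.left m))
        = lam (rc.right i * x) • 1 := by
      exact (Finset.sum_product ((rcr i).index) (rx.index)
        (fun p => lam ((reprMul (rcr i) rx).right p) • (reprMul (rcr i) rx).left p)).symm.trans
        (integral_repr lam hlaml (reprMul (rcr i) rx))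
    calc (∑ j ∈ (rcr i).index, ∑ m ∈ rx.index,
          lam ((rcr i).right j * rx.right m) • (aS (rc.left i) * ((rcr i).left j * rx.left m)))
        = aS (rc.left i) * (∑ j ∈ (rcr i).index, ∑ m ∈ rx.index,
            lam ((rcr i).right j * rx.right m) • ((rcr i).left j * rx.left m)) := by
          simp only [Finset.mul_sum, mul_smul_comm]
      _ = aS (rc.left i) * (lam (rc.right i * x) • 1) := by rw [inner]
      _ = _ := by
          simp only [LinearMap.comp_apply, Algebra.linearMap_apply, LinearMap.mulRight_apply,
            Algebra.algebraMap_eq_smul_one, mul_smul_comm, haS]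
  have wayB :
      (∑ i ∈ rc.index, ∑ j ∈ (rcr i).index, ∑ m ∈ rx.index,
        lam ((rcr i).right j * rx.right m) • (aS (rc.left i) * ((rcr i).left j * rx.left m)))
      = swr (lam ∘ₗ LinearMap.mulLeft k c) x := by
    have reorder : (∑ i ∈ rc.index, ∑ j ∈ (rcr i).index, ∑ m ∈ rx.index,
        lam ((rcr i).right j * rx.right m) • (aS (rc.left i) * ((rcr i).left j * rx.left m)))
        = ∑ m ∈ rx.index, ∑ i ∈ rc.index, ∑ j ∈ (rcr i).index,
          lam ((rcr i).right j * rx.right m) • (aS (rc.left i) * ((rcr i).left j * rx.left m)) := by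
      rw [show (∑ i ∈ rc.index, ∑ j ∈ (rcr i).index, ∑ m ∈ rx.index,
          lam ((rcr i).right j * rx.right m) • (aS (rc.left i) * ((rcr i).left j * rx.left m)))
          = ∑ i ∈ rc.index, ∑ m ∈ rx.index, ∑ j ∈ (rcr i).index,
            lam ((rcr i).right j * rx.right m) • (aS (rc.left i) * ((rcr i).left j * rx.left m))
        from Finset.sum_congr rfl fun i _ => Finset.sum_comm]
      exact Finset.sum_comm
    rw [reorder, swr_repr _ rx]
    refine Finset.sum_congr rfl fun m _ => ?_
    set Φ : H →ₗ[k] H :=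
      (LinearMap.toSpanSingleton k H (rx.left m)) ∘ₗ lam ∘ₗ LinearMap.mulRight k (rx.right m)
      with hΦ
    have hΦ' : ∀ z : H, Φ z = lam (z * rx.right m) • rx.left m := fun z => rfl
    calc (∑ i ∈ rc.index, ∑ j ∈ (rcr i).index,
          lam ((rcr i).right j * rx.right m) • (aS (rc.left i) * ((rcr i).left j * rx.left m)))
        = ∑ i ∈ rc.index, ∑ j ∈ (rcr i).index,
            aS (rc.left i) * (LinearMap.id ((rcr i).left j) : H) * Φ ((rcr i).right j) := by
          refine Finset.sum_congr rfl fun i _ => Finset.sum_congr rfl fun j _ => ?_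
          simp only [hΦ', LinearMap.id_coe, id_eq, mul_assoc, mul_smul_comm, smul_smul]
      _ = ∑ i ∈ rc.index, ∑ j ∈ (rcl i).index,
            aS ((rcl i).left j) * (LinearMap.id ((rcl i).right j) : H) * Φ (rc.right i) :=
          (M3 aS LinearMap.id Φ rc rcl rcr).symm
      _ = Φ c := by
          simp only [LinearMap.id_coe, id_eq, mul_assoc]
          exact CT1 Φ rc rcl
      _ = lam (c * rx.right m) • rx.left m := hΦ' c
      _ = (lam ∘ₗ LinearMap.mulLeft k c) (rx.right m) • rx.left m := rfl
  exact wayB.symm.trans wayA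

/-- L2 : `λ(c₁ x) c₂ = λ(c x₁) S(g) S(x₂)`. -/
lemma L2 {g : H} (hglam : ∀ h : H, swl lam h = lam h • HopfAlgebra.antipode (R := k) g)
    (c x : H) :
    swl (lam ∘ₗ LinearMap.mulRight k x) c
      = sw2 ((Algebra.linearMap k H) ∘ₗ lam ∘ₗ LinearMap.mulLeft k c)
          (LinearMap.mulLeft k (HopfAlgebra.antipode (R := k) g) ∘ₗ
            HopfAlgebra.antipode (R := k)) x := by
  classical
  set aS : H →ₗ[k] H := HopfAlgebra.antipode (R := k) (A := H) with haS
  set rc := ℛ k c with hrc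
  set rx := ℛ k x with hrx
  set rxr : (m : H × H) → Coalgebra.Repr k (rx.right m) (H × H) := fun m => ℛ k (rx.right m) with hrxr
  set rxl : (m : H × H) → Coalgebra.Repr k (rx.left m) (H × H) := fun m => ℛ k (rx.left m) with hrxl
  have wayA :
      (∑ i ∈ rc.index, ∑ m ∈ rx.index, ∑ n ∈ (rxr m).index,
        lam (rc.left i * rx.left m) •
          (rc.right i * ((rxr m).left n * aS ((rxr m).right n))))
      = swl (lam ∘ₗ LinearMap.mulRight k x) c := by
    rw [swl_repr _ rc]
    refine Finset.sum_congr rfl fun i _ => ?_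
    set Φ : H →ₗ[k] H :=
      (LinearMap.toSpanSingleton k H (rc.right i)) ∘ₗ lam ∘ₗ LinearMap.mulLeft k (rc.left i)
      with hΦ
    have hΦ' : ∀ z : H, Φ z = lam (rc.left i * z) • rc.right i := fun z => rfl
    calc (∑ m ∈ rx.index, ∑ n ∈ (rxr m).index,
          lam (rc.left i * rx.left m) •
            (rc.right i * ((rxr m).left n * aS ((rxr m).right n))))
        = ∑ m ∈ rx.index, ∑ n ∈ (rxr m).index,
            Φ (rx.left m) * ((rxr m).left n * aS ((rxr m).right n)) := by
          refine Finset.sum_congr rfl fun m _ => Finset.sum_congr rfl fun n _ => ?_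
          rw [hΦ', smul_mul_assoc]
      _ = Φ x := CT2 Φ rx rxr
      _ = (lam ∘ₗ LinearMap.mulRight k x) (rc.left i) • rc.right i := rfl
  have wayB :
      (∑ i ∈ rc.index, ∑ m ∈ rx.index, ∑ n ∈ (rxr m).index,
        lam (rc.left i * rx.left m) •
          (rc.right i * ((rxr m).left n * aS ((rxr m).right n))))
      = sw2 ((Algebra.linearMap k H) ∘ₗ lam ∘ₗ LinearMap.mulLeft k c)
          (LinearMap.mulLeft k (HopfAlgebra.antipode (R := k) g) ∘ₗ
            HopfAlgebra.antipode (R := k)) x := by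
    have nest : ∀ i ∈ rc.index,
        (∑ m ∈ rx.index, ∑ n ∈ (rxr m).index,
          lam (rc.left i * rx.left m) •
            (rc.right i * ((rxr m).left n * aS ((rxr m).right n))))
        = ∑ m ∈ rx.index, ∑ n ∈ (rxl m).index,
            lam (rc.left i * (rxl m).left n) •
              (rc.right i * (rxl m).right n * aS (rx.right m)) := by
      intro i _
      set f : H →ₗ[k] H := (Algebra.linearMap k H) ∘ₗ lam ∘ₗ LinearMap.mulLeft k (rc.left i)
        with hf
      set gm : H →ₗ[k] H := LinearMap.mulLeft k (rc.right i) with hgm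
      have hf' : ∀ z : H, f z = algebraMap k H (lam (rc.left i * z)) := fun z => rfl
      have hgm' : ∀ z : H, gm z = rc.right i * z := fun z => rfl
      calc (∑ m ∈ rx.index, ∑ n ∈ (rxr m).index,
            lam (rc.left i * rx.left m) •
              (rc.right i * ((rxr m).left n * aS ((rxr m).right n))))
          = ∑ m ∈ rx.index, ∑ n ∈ (rxr m).index,
              f (rx.left m) * gm ((rxr m).left n) * aS ((rxr m).right n) := by
            refine Finset.sum_congr rfl fun m _ => Finset.sum_congr rfl fun n _ => ?_
            rw [hf', hgm', Algebra.algebraMap_eq_smul_one, smul_mul_assoc, smul_mul_assoc,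
              one_mul, mul_assoc]
        _ = ∑ m ∈ rx.index, ∑ n ∈ (rxl m).index,
              f ((rxl m).left n) * gm ((rxl m).right n) * aS (rx.right m) :=
            (M3 f gm aS rx rxl rxr).symm
        _ = ∑ m ∈ rx.index, ∑ n ∈ (rxl m).index,
              lam (rc.left i * (rxl m).left n) •
                (rc.right i * (rxl m).right n * aS (rx.right m)) := by
            refine Finset.sum_congr rfl fun m _ => Finset.sum_congr rfl fun n _ => ?_
            rw [hf', hgm', Algebra.algebraMap_eq_smul_one, smul_mul_assoc, smul_mul_assoc,
              one_mul]
    rw [Finset.sum_congr rfl nest, Finset.sum_comm, sw2_repr _ _ rx]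
    refine Finset.sum_congr rfl fun m _ => ?_
    have inner : (∑ i ∈ rc.index, ∑ n ∈ (rxl m).index,
        lam (rc.left i * (rxl m).left n) • (rc.right i * (rxl m).right n))
        = lam (c * rx.left m) • HopfAlgebra.antipode (R := k) g :=
      (Finset.sum_product (rc.index) ((rxl m).index)
        (fun p => lam ((reprMul rc (rxl m)).left p) • (reprMul rc (rxl m)).right p)).symm.trans
        (glam_repr lam hglam (reprMul rc (rxl m)))
    calc (∑ i ∈ rc.index, ∑ n ∈ (rxl m).index,
          lam (rc.left i * (rxl m).left n) •
            (rc.right i * (rxl m).right n * aS (rx.right m)))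
        = (∑ i ∈ rc.index, ∑ n ∈ (rxl m).index,
            lam (rc.left i * (rxl m).left n) •
              (rc.right i * (rxl m).right n)) * aS (rx.right m) := by
          simp only [Finset.sum_mul, smul_mul_assoc]
      _ = (lam (c * rx.left m) • HopfAlgebra.antipode (R := k) g) * aS (rx.right m) := by
          rw [inner]
      _ = _ := by
          simp only [LinearMap.comp_apply, Algebra.linearMap_apply, LinearMap.mulLeft_apply,
            Algebra.algebraMap_eq_smul_one, smul_mul_assoc, one_mul, haS]
  exact wayA.symm.trans wayB

end Integral

section Inj
variable (lam : H →ₗ[k] k)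

lemma sep {w : H ⊗[k] H}
    (hw : ∀ φ : Module.Dual k H,
      (TensorProduct.rid k H) ((LinearMap.lTensor H φ) w) = 0) :
    w = 0 := by
  classical
  rw [← LinearEquiv.map_eq_zero_iff
    (TensorProduct.congr (LinearEquiv.refl k H) (Module.Basis.ofVectorSpace k H).repr),
    ← LinearEquiv.map_eq_zero_iff
      (TensorProduct.finsuppScalarRight k k H (Module.Basis.ofVectorSpaceIndex k H))]
  ext j
  have hj : (Finsupp.lapply j ∘ₗ
        (TensorProduct.finsuppScalarRight k k H (Module.Basis.ofVectorSpaceIndex k H) :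
          H ⊗[k] ((Module.Basis.ofVectorSpaceIndex k H) →₀ k) →ₗ[k] _) ∘ₗ
        (TensorProduct.congr (LinearEquiv.refl k H) (Module.Basis.ofVectorSpace k H).repr :
          H ⊗[k] H →ₗ[k] H ⊗[k] ((Module.Basis.ofVectorSpaceIndex k H) →₀ k)))
      = ((TensorProduct.rid k H).toLinearMap ∘ₗ
          LinearMap.lTensor H ((Module.Basis.ofVectorSpace k H).coord j)) := by
    apply TensorProduct.ext'
    intro a v
    simp only [LinearMap.comp_apply, LinearEquiv.coe_coe, TensorProduct.congr_tmul,
      LinearEquiv.refl_apply, Finsupp.lapply_apply, LinearMap.lTensor_tmul,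
      TensorProduct.rid_tmul, TensorProduct.finsuppScalarRight_apply_tmul_apply,
      Module.Basis.coord_apply]
  have h := LinearMap.congr_fun hj w
  simp only [LinearMap.comp_apply, LinearEquiv.coe_coe] at h
  simp only [Finsupp.lapply_apply] at h
  rw [h, hw ((Module.Basis.ofVectorSpace k H).coord j), Finsupp.coe_zero, Pi.zero_apply]

include lam in
lemma keyL (hinj : Function.Injective (fun h : H => lam ∘ₗ LinearMap.mulLeft k h))
    {w : H ⊗[k] H}
    (hw : ∀ x : H, (TensorProduct.lid k H)
      ((LinearMap.rTensor H (lam ∘ₗ LinearMap.mulRight k x)) w) = 0) :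
    w = 0 := by
  apply sep
  intro φ
  set v := (TensorProduct.rid k H) ((LinearMap.lTensor H φ) w) with hv
  have hkey : ∀ x : H, lam (v * x) = 0 := by
    intro x
    have comm_eq : (lam ∘ₗ LinearMap.mulRight k x ∘ₗ (TensorProduct.rid k H).toLinearMap ∘ₗ
          LinearMap.lTensor H φ)
        = (φ ∘ₗ (TensorProduct.lid k H).toLinearMap ∘ₗ
            LinearMap.rTensor H (lam ∘ₗ LinearMap.mulRight k x)) := by
      apply TensorProduct.ext'
      intro a c
      simp only [LinearMap.comp_apply, LinearEquiv.coe_coe, LinearMap.lTensor_tmul,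
        LinearMap.rTensor_tmul, TensorProduct.rid_tmul, TensorProduct.lid_tmul,
        LinearMap.mulRight_apply, map_smul, smul_mul_assoc, map_smul, smul_eq_mul]
      exact mul_comm _ _
    have h := LinearMap.congr_fun comm_eq w
    simp only [LinearMap.comp_apply, LinearEquiv.coe_coe] at h
    rw [hv]
    simp only [LinearMap.mulRight_apply] at h
    rw [h, hw x, map_zero]
  have heq : (fun h : H => lam ∘ₗ LinearMap.mulLeft k h) v
      = (fun h : H => lam ∘ₗ LinearMap.mulLeft k h) 0 := by
    ext x
    simp only [LinearMap.comp_apply, LinearMap.mulLeft_apply, zero_mul, map_zero]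
    exact hkey x
  exact hinj heq

include lam in
lemma keyR (hinj : Function.Injective (fun h : H => lam ∘ₗ LinearMap.mulLeft k h))
    {w : H ⊗[k] H}
    (hw : ∀ x : H, (TensorProduct.rid k H)
      ((LinearMap.lTensor H (lam ∘ₗ LinearMap.mulRight k x)) w) = 0) :
    w = 0 := by
  have hcw : (TensorProduct.comm k H H) w = 0 := by
    apply keyL lam hinj
    intro x
    have flip_eq : ((TensorProduct.lid k H).toLinearMap ∘ₗ
          LinearMap.rTensor H (lam ∘ₗ LinearMap.mulRight k x) ∘ₗ
          (TensorProduct.comm k H H).toLinearMap)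
        = ((TensorProduct.rid k H).toLinearMap ∘ₗ
            LinearMap.lTensor H (lam ∘ₗ LinearMap.mulRight k x)) := by
      apply TensorProduct.ext'
      intro a c
      simp [TensorProduct.lid_tmul, TensorProduct.rid_tmul]
    have h := LinearMap.congr_fun flip_eq w
    simp only [LinearMap.comp_apply, LinearEquiv.coe_coe] at h
    rw [h, hw x]
  exact (LinearEquiv.map_eq_zero_iff (TensorProduct.comm k H H)).mp hcw

end Inj


section SinvDef
variable (hS : Function.Bijective ⇑(HopfAlgebra.antipode (R := k) (A := H)))

/-- inverse of the antipode -/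
noncomputable def Sinv : H →ₗ[k] H :=
  (LinearEquiv.ofBijective (HopfAlgebra.antipode (R := k)) hS).symm.toLinearMap

lemma Sinv_antipode (z : H) : Sinv hS (HopfAlgebra.antipode (R := k) z) = z :=
  (LinearEquiv.ofBijective (HopfAlgebra.antipode (R := k)) hS).symm_apply_apply z

lemma antipode_Sinv (z : H) : HopfAlgebra.antipode (R := k) (Sinv hS z) = z :=
  (LinearEquiv.ofBijective (HopfAlgebra.antipode (R := k)) hS).apply_symm_apply z

lemma counit_Sinv (z : H) :
    Coalgebra.counit (R := k) (Sinv hS z) = Coalgebra.counit (R := k) z := by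
  conv_rhs => rw [← antipode_Sinv hS z]
  rw [counit_antipode]

end SinvDef

section Formulas
variable (lam : H →ₗ[k] k) (χ : H →ₐ[k] H) {g : H}

/-- The second-leg map in formula F1 : `z ↦ S(g) * (S²(z) * g)`. -/
noncomputable def m2 (g : H) : H →ₗ[k] H :=
  LinearMap.mulLeft k (HopfAlgebra.antipode (R := k) (A := H) g) ∘ₗ LinearMap.mulRight k g ∘ₗ
    HopfAlgebra.antipode (R := k) (A := H) ∘ₗ HopfAlgebra.antipode (R := k) (A := H)

lemma m2_apply (g z : H) : m2 (k := k) g z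
    = HopfAlgebra.antipode (R := k) g *
        (HopfAlgebra.antipode (R := k) (HopfAlgebra.antipode (R := k) z) * g) := by
  simp [m2, mul_assoc]

/-- Formula F1 : `Δ(χ h) = χ(h₁) ⊗ S(g) S²(h₂) g`. -/
lemma F1 (hlaml : ∀ h : H, swr lam h = lam h • (1 : H))
    (hinj : Function.Injective (fun h : H => lam ∘ₗ LinearMap.mulLeft k h))
    (hχ : ∀ x h : H, lam (x * h) = lam (χ h * x))
    (hg : Coalgebra.comul (R := k) g = g ⊗ₜ[k] g)
    (hgε : Coalgebra.counit (R := k) g = 1)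
    (hglam : ∀ h : H, swl lam h = lam h • HopfAlgebra.antipode (R := k) g)
    (h : H) :
    Coalgebra.comul (R := k) (χ h)
      = (TensorProduct.map χ.toLinearMap (m2 (k := k) g)) (Coalgebra.comul (R := k) h) := by
  classical
  set aS : H →ₗ[k] H := HopfAlgebra.antipode (R := k) (A := H) with haS
  rw [← sub_eq_zero]
  apply keyL lam hinj
  intro x
  rw [map_sub, map_sub]
  rw [sub_eq_zero]
  -- LHS over comul (χ h) : this is swl (lam ∘ₗ mulRight x) (χ h)
  have lhs_eq : (TensorProduct.lid k H)
      ((LinearMap.rTensor H (lam ∘ₗ LinearMap.mulRight k x)) (Coalgebra.comul (R := k) (χ h)))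
      = swl (lam ∘ₗ LinearMap.mulRight k x) (χ h) := rfl
  -- RHS over mapped comul h
  set rh := ℛ k h with hrh
  have rhs_eq : (TensorProduct.lid k H)
      ((LinearMap.rTensor H (lam ∘ₗ LinearMap.mulRight k x))
        ((TensorProduct.map χ.toLinearMap (m2 (k := k) g)) (Coalgebra.comul (R := k) h)))
      = ∑ i ∈ rh.index, lam (χ (rh.left i) * x) • (m2 (k := k) g (rh.right i)) := by
    rw [← rh.eq]
    simp [map_sum, TensorProduct.map_tmul]
  rw [lhs_eq, rhs_eq]
  -- compute the LHS via L2 twice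
  have step1 : swl (lam ∘ₗ LinearMap.mulRight k x) (χ h)
      = sw2 ((Algebra.linearMap k H) ∘ₗ lam ∘ₗ LinearMap.mulRight k h)
          (LinearMap.mulLeft k (HopfAlgebra.antipode (R := k) g) ∘ₗ
            HopfAlgebra.antipode (R := k)) x := by
    rw [L2 lam hglam (χ h) x]
    have maps_eq : ((Algebra.linearMap k H) ∘ₗ lam ∘ₗ LinearMap.mulLeft k (χ h))
        = ((Algebra.linearMap k H) ∘ₗ lam ∘ₗ LinearMap.mulRight k h) := by
      apply LinearMap.ext
      intro u
      simp only [LinearMap.comp_apply, Algebra.linearMap_apply, LinearMap.mulLeft_apply,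
        LinearMap.mulRight_apply]
      rw [← hχ u h]
    rw [show sw2 ((Algebra.linearMap k H) ∘ₗ lam ∘ₗ LinearMap.mulLeft k (χ h))
          (LinearMap.mulLeft k (HopfAlgebra.antipode (R := k) g) ∘ₗ
            HopfAlgebra.antipode (R := k))
        = sw2 ((Algebra.linearMap k H) ∘ₗ lam ∘ₗ LinearMap.mulRight k h)
          (LinearMap.mulLeft k (HopfAlgebra.antipode (R := k) g) ∘ₗ
            HopfAlgebra.antipode (R := k)) from by rw [maps_eq]]
  have step2 : sw2 ((Algebra.linearMap k H) ∘ₗ lam ∘ₗ LinearMap.mulRight k h)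
      (LinearMap.mulLeft k (HopfAlgebra.antipode (R := k) g) ∘ₗ
        HopfAlgebra.antipode (R := k)) x
      = HopfAlgebra.antipode (R := k) g *
          aS (swl (lam ∘ₗ LinearMap.mulRight k h) x) := by
    set rx := ℛ k x with hrx
    rw [sw2_repr _ _ rx, swl_repr _ rx, map_sum, Finset.mul_sum]
    refine Finset.sum_congr rfl fun m _ => ?_
    simp only [LinearMap.comp_apply, Algebra.linearMap_apply, LinearMap.mulLeft_apply,
      LinearMap.mulRight_apply, Algebra.algebraMap_eq_smul_one, smul_mul_assoc, one_mul,
      map_smul, mul_smul_comm, haS]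
  have step3 : HopfAlgebra.antipode (R := k) g * aS (swl (lam ∘ₗ LinearMap.mulRight k h) x)
      = ∑ i ∈ rh.index, lam (x * rh.left i) •
          (HopfAlgebra.antipode (R := k) g *
            (aS (aS (rh.right i)) * g)) := by
    rw [L2 lam hglam x h, sw2_repr _ _ rh, map_sum, Finset.mul_sum]
    refine Finset.sum_congr rfl fun i _ => ?_
    simp only [LinearMap.comp_apply, Algebra.linearMap_apply, LinearMap.mulLeft_apply,
      LinearMap.mulRight_apply, Algebra.algebraMap_eq_smul_one, smul_mul_assoc, one_mul,
      map_smul, mul_smul_comm, haS]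
    rw [antipode_mul, antipode_antipode_g hg hgε]
  rw [step1, step2, step3]
  refine Finset.sum_congr rfl fun i _ => ?_
  rw [m2_apply, ← hχ x (rh.left i), haS]

/-- Formula F2 : `Δ(χ h) = S⁻²(h₁) ⊗ χ(h₂)`. -/
lemma F2 (hS : Function.Bijective ⇑(HopfAlgebra.antipode (R := k) (A := H)))
    (hlaml : ∀ h : H, swr lam h = lam h • (1 : H))
    (hinj : Function.Injective (fun h : H => lam ∘ₗ LinearMap.mulLeft k h))
    (hχ : ∀ x h : H, lam (x * h) = lam (χ h * x))
    (h : H) :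
    Coalgebra.comul (R := k) (χ h)
      = (TensorProduct.map (Sinv hS ∘ₗ Sinv hS) χ.toLinearMap)
          (Coalgebra.comul (R := k) h) := by
  classical
  set aS : H →ₗ[k] H := HopfAlgebra.antipode (R := k) (A := H) with haS
  rw [← sub_eq_zero]
  apply keyR lam hinj
  intro x
  rw [map_sub, map_sub, sub_eq_zero]
  apply hS.injective
  -- LHS : S (swr (lam ∘ mulRight x) (χ h))
  have lhs_eq : (TensorProduct.rid k H)
      ((LinearMap.lTensor H (lam ∘ₗ LinearMap.mulRight k x)) (Coalgebra.comul (R := k) (χ h)))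
      = swr (lam ∘ₗ LinearMap.mulRight k x) (χ h) := rfl
  rw [lhs_eq]
  have side1 : aS (swr (lam ∘ₗ LinearMap.mulRight k x) (χ h))
      = swr (lam ∘ₗ LinearMap.mulRight k h) x := by
    set rC := ℛ k (χ h) with hrC
    have e1 : aS (swr (lam ∘ₗ LinearMap.mulRight k x) (χ h))
        = sw2 aS ((Algebra.linearMap k H) ∘ₗ lam ∘ₗ LinearMap.mulRight k x) (χ h) := by
      rw [swr_repr _ rC, sw2_repr _ _ rC, map_sum]
      refine Finset.sum_congr rfl fun i _ => ?_
      simp only [map_smul, LinearMap.comp_apply, Algebra.linearMap_apply,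
        LinearMap.mulRight_apply, Algebra.algebraMap_eq_smul_one, mul_smul_comm, mul_one]
    rw [e1, ← L1 lam hlaml (χ h) x]
    have maps_eq : (lam ∘ₗ LinearMap.mulLeft k (χ h)) = (lam ∘ₗ LinearMap.mulRight k h) := by
      apply LinearMap.ext
      intro u
      simp only [LinearMap.comp_apply, LinearMap.mulLeft_apply, LinearMap.mulRight_apply]
      exact (hχ u h).symm
    rw [maps_eq]
  rw [side1]
  -- RHS
  set rh := ℛ k h with hrh
  have rhs_eq : (TensorProduct.rid k H)
      ((LinearMap.lTensor H (lam ∘ₗ LinearMap.mulRight k x))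
        ((TensorProduct.map (Sinv hS ∘ₗ Sinv hS) χ.toLinearMap) (Coalgebra.comul (R := k) h)))
      = ∑ i ∈ rh.index, lam (χ (rh.right i) * x) • (Sinv hS (Sinv hS (rh.left i))) := by
    rw [← rh.eq]
    simp [map_sum, TensorProduct.map_tmul]
  rw [rhs_eq, map_sum]
  have side2 : (∑ i ∈ rh.index,
      aS (lam (χ (rh.right i) * x) • Sinv hS (Sinv hS (rh.left i))))
      = Sinv hS (swr (lam ∘ₗ LinearMap.mulLeft k x) h) := by
    rw [swr_repr _ rh, map_sum]
    refine Finset.sum_congr rfl fun i _ => ?_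
    rw [map_smul, map_smul, antipode_Sinv hS]
    congr 1
    simp only [LinearMap.comp_apply, LinearMap.mulLeft_apply]
    exact (hχ x (rh.right i)).symm
  rw [side2, L1 lam hlaml x h]
  set rx := ℛ k x with hrx
  rw [sw2_repr _ _ rx, map_sum, swr_repr _ rx]
  refine (Finset.sum_congr rfl fun m _ => ?_).symm
  simp only [LinearMap.comp_apply, Algebra.linearMap_apply, LinearMap.mulRight_apply,
    Algebra.algebraMap_eq_smul_one, mul_smul_comm, mul_one, map_smul, haS, Sinv_antipode hS]

end Formulas


section Claims
variable (lam : H →ₗ[k] k) (χ : H →ₐ[k] H) {g : H}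

/-- the distinguished grouplike of `H⁎`, as a functional -/
noncomputable def Af (χ : H →ₐ[k] H) : H →ₗ[k] k :=
  Coalgebra.counit (R := k) ∘ₗ χ.toLinearMap

lemma Af_apply (z : H) : Af (k := k) χ z = Coalgebra.counit (R := k) (χ z) := rfl

lemma Af_one : Af (k := k) χ 1 = 1 := by
  rw [Af_apply, map_one, Bialgebra.counit_one]

lemma Af_mul (u v : H) : Af (k := k) χ (u * v) = Af (k := k) χ u * Af (k := k) χ v := by
  simp only [Af_apply, map_mul, Bialgebra.counit_mul]

lemma counit_m2 (hgε : Coalgebra.counit (R := k) g = 1) (z : H) :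
    Coalgebra.counit (R := k) (m2 (k := k) g z) = Coalgebra.counit (R := k) z := by
  rw [m2_apply, Bialgebra.counit_mul, Bialgebra.counit_mul, counit_antipode, counit_antipode,
    counit_antipode, hgε, one_mul, mul_one]

variable (hS : Function.Bijective ⇑(HopfAlgebra.antipode (R := k) (A := H)))
  (hlaml : ∀ h : H, swr lam h = lam h • (1 : H))
  (hinj : Function.Injective (fun h : H => lam ∘ₗ LinearMap.mulLeft k h))
  (hχ : ∀ x h : H, lam (x * h) = lam (χ h * x))
  (hg : Coalgebra.comul (R := k) g = g ⊗ₜ[k] g)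
  (hgε : Coalgebra.counit (R := k) g = 1)
  (hglam : ∀ h : H, swl lam h = lam h • HopfAlgebra.antipode (R := k) g)

include hS hlaml hinj hχ hg hgε hglam in
/-- Claim 2 : `S²(χ h) = α(h₂) h₁`. -/
lemma claim2 (h : H) :
    HopfAlgebra.antipode (R := k) (HopfAlgebra.antipode (R := k) (χ h))
      = swr (Af (k := k) χ) h := by
  classical
  have T := (F1 lam χ hlaml hinj hχ hg hgε hglam h).symm.trans (F2 lam χ hS hlaml hinj hχ h)
  set rh := ℛ k h with hrh
  have hx1 : (TensorProduct.rid k H) ((LinearMap.lTensor H (Coalgebra.counit (R := k)))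
      ((TensorProduct.map χ.toLinearMap (m2 (k := k) g)) (Coalgebra.comul (R := k) h)))
      = χ h := by
    rw [← rh.eq]
    simp only [map_sum, TensorProduct.map_tmul, LinearMap.lTensor_tmul, TensorProduct.rid_tmul]
    have : ∀ i ∈ rh.index, Coalgebra.counit (R := k) (m2 (k := k) g (rh.right i)) •
        χ.toLinearMap (rh.left i)
        = χ.toLinearMap (Coalgebra.counit (R := k) (rh.right i) • rh.left i) := by
      intro i _
      rw [counit_m2 hgε, map_smul]
    rw [Finset.sum_congr rfl this, ← map_sum, sum_counit_smul_left rh]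
    rfl
  have hx2 : (TensorProduct.rid k H) ((LinearMap.lTensor H (Coalgebra.counit (R := k)))
      ((TensorProduct.map (Sinv hS ∘ₗ Sinv hS) χ.toLinearMap) (Coalgebra.comul (R := k) h)))
      = Sinv hS (Sinv hS (swr (Af (k := k) χ) h)) := by
    rw [← rh.eq, swr_repr _ rh]
    simp only [map_sum, TensorProduct.map_tmul, LinearMap.lTensor_tmul, TensorProduct.rid_tmul,
      LinearMap.comp_apply, map_smul]
    rfl
  have := congrArg (fun w => (TensorProduct.rid k H)
    ((LinearMap.lTensor H (Coalgebra.counit (R := k))) w)) T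
  rw [hx1, hx2] at this
  rw [this, antipode_Sinv hS, antipode_Sinv hS]

include hS hlaml hinj hχ hg hgε hglam in
/-- Claim 1 : `S²(α(h₁) h₂) = g χ(h) S(g)`. -/
lemma claim1 (h : H) :
    HopfAlgebra.antipode (R := k) (HopfAlgebra.antipode (R := k) (swl (Af (k := k) χ) h))
      = g * (χ h * HopfAlgebra.antipode (R := k) g) := by
  classical
  have T := (F1 lam χ hlaml hinj hχ hg hgε hglam h).symm.trans (F2 lam χ hS hlaml hinj hχ h)
  set rh := ℛ k h with hrh
  have hx1 : (TensorProduct.lid k H) ((LinearMap.rTensor H (Coalgebra.counit (R := k)))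
      ((TensorProduct.map χ.toLinearMap (m2 (k := k) g)) (Coalgebra.comul (R := k) h)))
      = m2 (k := k) g (swl (Af (k := k) χ) h) := by
    rw [← rh.eq, swl_repr _ rh]
    simp only [map_sum, TensorProduct.map_tmul, LinearMap.rTensor_tmul, TensorProduct.lid_tmul,
      map_smul]
    rfl
  have hx2 : (TensorProduct.lid k H) ((LinearMap.rTensor H (Coalgebra.counit (R := k)))
      ((TensorProduct.map (Sinv hS ∘ₗ Sinv hS) χ.toLinearMap) (Coalgebra.comul (R := k) h)))
      = χ h := by
    rw [← rh.eq]
    simp only [map_sum, TensorProduct.map_tmul, LinearMap.rTensor_tmul, TensorProduct.lid_tmul,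
      LinearMap.comp_apply]
    have : ∀ i ∈ rh.index, Coalgebra.counit (R := k) (Sinv hS (Sinv hS (rh.left i))) •
        χ.toLinearMap (rh.right i)
        = χ.toLinearMap (Coalgebra.counit (R := k) (rh.left i) • rh.right i) := by
      intro i _
      rw [counit_Sinv hS, counit_Sinv hS, map_smul]
    rw [Finset.sum_congr rfl this, ← map_sum, sum_counit_smul_right rh]
    rfl
  have heq := congrArg (fun w => (TensorProduct.lid k H)
    ((LinearMap.rTensor H (Coalgebra.counit (R := k))) w)) T
  rw [hx1, hx2] at heq
  -- heq : m2 g (swl A h) = χ h ; solve for S²(swl A h)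
  rw [m2_apply] at heq
  have h1 : g * HopfAlgebra.antipode (R := k) g = 1 := g_mul_antipode_g hg hgε
  have h2 : HopfAlgebra.antipode (R := k) g * g = 1 := antipode_g_mul_g hg hgε
  set Y := HopfAlgebra.antipode (R := k) (HopfAlgebra.antipode (R := k)
    (swl (Af (k := k) χ) h)) with hY
  -- heq : S g * (Y * g) = χ h
  calc Y = (g * HopfAlgebra.antipode (R := k) g) * (Y * (g * HopfAlgebra.antipode (R := k) g)) := by
        rw [h1, one_mul, mul_one]
    _ = g * ((HopfAlgebra.antipode (R := k) g * (Y * g)) * HopfAlgebra.antipode (R := k) g) := by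
        simp only [mul_assoc]
    _ = g * (χ h * HopfAlgebra.antipode (R := k) g) := by rw [heq]

end Claims

lemma S2_mul (u v : H) :
    HopfAlgebra.antipode (R := k) (HopfAlgebra.antipode (R := k) (u * v))
      = HopfAlgebra.antipode (R := k) (HopfAlgebra.antipode (R := k) u) *
        HopfAlgebra.antipode (R := k) (HopfAlgebra.antipode (R := k) v) := by
  rw [antipode_mul, antipode_mul]

end Radford

open Radford Coalgebra HopfAlgebra LinearMap in
/-- Radford's `S⁴` formula for co-Frobenius Hopf algebras.
`H` Hopf algebra over `k` with bijective antipode `S`, `λ ≠ 0` a left integral for `H`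
in `H⁎` with `h ↦ λ ↼ h` injective, `χ` a bijective algebra endomorphism with
`λ(x·h) = λ(χ(h)·x)`, `α := ε ∘ χ`, and `g` grouplike with `λ(h₁)·h₂ = λ(h)·S(g)`.
Then for all `h`, `S⁴(h) = α(S(h₁))·α(h₃)·g·h₂·S(g)` (i.e. `S⁴(h) = g(α ⇀ h ↼ α⁻¹)g⁻¹`). -/
theorem statement10
    (hS : Function.Bijective ⇑(HopfAlgebra.antipode (R := k) (A := H)))
    (lam : H →ₗ[k] k) (hlam0 : lam ≠ 0)
    (hlaml : ∀ h : H, swr lam h = lam h • (1 : H))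
    (hinj : Function.Injective (fun h : H => lam ∘ₗ LinearMap.mulLeft k h))
    (χ : H →ₐ[k] H) (hχbij : Function.Bijective ⇑χ)
    (hχ : ∀ x h : H, lam (x * h) = lam (χ h * x))
    (g : H) (hg : Coalgebra.comul (R := k) g = g ⊗ₜ[k] g)
    (hgε : Coalgebra.counit (R := k) g = 1)
    (hglam : ∀ h : H, swl lam h = lam h • HopfAlgebra.antipode (R := k) g) :
    ∀ h : H,
      HopfAlgebra.antipode (R := k) (HopfAlgebra.antipode (R := k)
        (HopfAlgebra.antipode (R := k) (HopfAlgebra.antipode (R := k) h))) =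
      sw3 ((Algebra.linearMap k H) ∘ₗ (Coalgebra.counit (R := k) ∘ₗ χ.toLinearMap) ∘ₗ
            HopfAlgebra.antipode (R := k))
        ((LinearMap.mulRight k (HopfAlgebra.antipode (R := k) g)) ∘ₗ (LinearMap.mulLeft k g))
        ((Algebra.linearMap k H) ∘ₗ (Coalgebra.counit (R := k) ∘ₗ χ.toLinearMap)) h := by
  intro h
  classical
  set A : H →ₗ[k] k := Af (k := k) χ with hAdef
  have hA1 : A 1 = 1 := Af_one χ
  set rh := ℛ k h with hrh
  set rhl : (i : H × H) → Coalgebra.Repr k (rh.left i) (H × H) := fun i => ℛ k (rh.left i) with hrhl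
  set rhr : (i : H × H) → Coalgebra.Repr k (rh.right i) (H × H) := fun i => ℛ k (rh.right i) with hrhr
  set fmap : H →ₗ[k] H :=
    (Algebra.linearMap k H) ∘ₗ A ∘ₗ HopfAlgebra.antipode (R := k) with hfm
  set emap : H →ₗ[k] H := (Algebra.linearMap k H) ∘ₗ A with hem
  set gmapL : H →ₗ[k] H :=
    LinearMap.mulLeft k g ∘ₗ LinearMap.mulRight k (HopfAlgebra.antipode (R := k) g) with hgm
  have conv1 : ∀ u v w : H, fmap u * emap v * (LinearMap.id : H →ₗ[k] H) w
      = (A (HopfAlgebra.antipode (R := k) u) * A v) • w := by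
    intro u v w
    simp only [hfm, hem, LinearMap.comp_apply, Algebra.linearMap_apply, LinearMap.id_coe, id_eq,
      Algebra.algebraMap_eq_smul_one, smul_mul_assoc, one_mul, smul_smul]
  have conv2 : ∀ u v w : H, fmap u * gmapL v * emap w
      = (A (HopfAlgebra.antipode (R := k) u) * A w) •
          (g * (v * HopfAlgebra.antipode (R := k) g)) := by
    intro u v w
    simp only [hfm, hem, hgm, LinearMap.comp_apply, Algebra.linearMap_apply,
      LinearMap.mulLeft_apply, LinearMap.mulRight_apply, Algebra.algebraMap_eq_smul_one,
      smul_mul_assoc, one_mul, mul_one, mul_smul_comm, smul_smul, mul_assoc]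
    rw [mul_comm (A w) (A (HopfAlgebra.antipode (R := k) u))]
  -- reconstruction of h with the α-twist
  have hrec : h = ∑ i ∈ rh.index,
      A (HopfAlgebra.antipode (R := k) (rh.left i)) • swl A (rh.right i) := by
    have e1 : (∑ i ∈ rh.index, ∑ j ∈ (rhl i).index,
        A (HopfAlgebra.antipode (R := k) ((rhl i).left j) * (rhl i).right j) •
          (LinearMap.id : H →ₗ[k] H) (rh.right i)) = h := CTA A hA1 LinearMap.id rh rhl
    have e2 := M3 fmap emap LinearMap.id rh rhl rhr
    calc h = ∑ i ∈ rh.index, ∑ j ∈ (rhl i).index,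
          A (HopfAlgebra.antipode (R := k) ((rhl i).left j) * (rhl i).right j) •
            (LinearMap.id : H →ₗ[k] H) (rh.right i) := e1.symm
      _ = ∑ i ∈ rh.index, ∑ j ∈ (rhl i).index,
            fmap ((rhl i).left j) * emap ((rhl i).right j) *
              (LinearMap.id : H →ₗ[k] H) (rh.right i) := by
          refine Finset.sum_congr rfl fun i _ => Finset.sum_congr rfl fun j _ => ?_
          rw [conv1, Af_mul]
          rfl
      _ = ∑ i ∈ rh.index, ∑ j ∈ (rhr i).index,
            fmap (rh.left i) * emap ((rhr i).left j) *
              (LinearMap.id : H →ₗ[k] H) ((rhr i).right j) := e2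
      _ = ∑ i ∈ rh.index, A (HopfAlgebra.antipode (R := k) (rh.left i)) •
            swl A (rh.right i) := by
          refine Finset.sum_congr rfl fun i _ => ?_
          rw [swl_repr A (rhr i), Finset.smul_sum]
          refine Finset.sum_congr rfl fun j _ => ?_
          rw [conv1, smul_smul]
  -- apply S² and Claim 1
  have step5 : HopfAlgebra.antipode (R := k) (HopfAlgebra.antipode (R := k) h)
      = ∑ i ∈ rh.index, A (HopfAlgebra.antipode (R := k) (rh.left i)) •
          (g * (χ (rh.right i) * HopfAlgebra.antipode (R := k) g)) := by
    conv_lhs => rw [hrec]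
    rw [map_sum, map_sum]
    refine Finset.sum_congr rfl fun i _ => ?_
    rw [map_smul, map_smul, claim1 lam χ hS hlaml hinj hχ hg hgε hglam (rh.right i)]
  -- apply S² again, Claim 2
  have step6 : HopfAlgebra.antipode (R := k) (HopfAlgebra.antipode (R := k)
        (HopfAlgebra.antipode (R := k) (HopfAlgebra.antipode (R := k) h)))
      = ∑ i ∈ rh.index, A (HopfAlgebra.antipode (R := k) (rh.left i)) •
          (g * (swr A (rh.right i) * HopfAlgebra.antipode (R := k) g)) := by
    conv_lhs => rw [step5]
    rw [map_sum, map_sum]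
    refine Finset.sum_congr rfl fun i _ => ?_
    rw [map_smul, map_smul]
    congr 1
    rw [S2_mul, S2_mul, antipode_antipode_g hg hgε,
      claim2 lam χ hS hlaml hinj hχ hg hgε hglam (rh.right i), ← hAdef]
  have step7 : (∑ i ∈ rh.index, A (HopfAlgebra.antipode (R := k) (rh.left i)) •
          (g * (swr A (rh.right i) * HopfAlgebra.antipode (R := k) g)))
      = ∑ i ∈ rh.index, ∑ j ∈ (rhr i).index,
          fmap (rh.left i) * gmapL ((rhr i).left j) * emap ((rhr i).right j) := by
    refine Finset.sum_congr rfl fun i _ => ?_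
    rw [swr_repr A (rhr i), Finset.sum_mul, Finset.mul_sum, Finset.smul_sum]
    refine Finset.sum_congr rfl fun j _ => ?_
    rw [conv2, smul_mul_assoc, mul_smul_comm, smul_smul,
      mul_comm (A (HopfAlgebra.antipode (R := k) (rh.left i)))]
  have step8 := (M3 fmap gmapL emap rh rhl rhr).symm
  have step9 : sw3 ((Algebra.linearMap k H) ∘ₗ (Coalgebra.counit (R := k) ∘ₗ χ.toLinearMap) ∘ₗ
            HopfAlgebra.antipode (R := k))
        ((LinearMap.mulRight k (HopfAlgebra.antipode (R := k) g)) ∘ₗ (LinearMap.mulLeft k g))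
        ((Algebra.linearMap k H) ∘ₗ (Coalgebra.counit (R := k) ∘ₗ χ.toLinearMap)) h
      = ∑ i ∈ rh.index, ∑ j ∈ (rhl i).index,
          fmap ((rhl i).left j) * gmapL ((rhl i).right j) * emap (rh.right i) := by
    rw [sw3_repr _ _ _ rh rhl]
    refine Finset.sum_congr rfl fun i _ => Finset.sum_congr rfl fun j _ => ?_
    simp only [hfm, hem, hgm, hAdef, Af, LinearMap.comp_apply, Algebra.linearMap_apply,
      LinearMap.mulLeft_apply, LinearMap.mulRight_apply, mul_assoc]
  rw [step6, step7, step8]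
  exact step9.symm
end

section
/- Let H be a Hopf algebra over a field k with bijective antipode S, and let λ : H → k be a nonzero left integral for H in H⁎. Assume the map H → H⁎, h ↦ λ ↼ h, is injective. Let χ : H → H be a bijective algebra homomorphism satisfying λ(x·h) = λ(χ(h)·x) for all x, h ∈ H, set α := ε ∘ χ, and let g ∈ H be a grouplike element satisfying λ(h₁)·h₂ = λ(h)·S(g) for all h ∈ H. Then for every h ∈ H, χ(h) = α(h₁)·g⁻¹·S²(h₂)·g = α(h₁)·S(g)·S²(h₂)·g. -/
/-!
Helper definitions for Sweedler-notation expressions in a Hopf algebra `H` over a field `k`.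
-/

open TensorProduct

variable {k H : Type*} [Field k] [Ring H] [HopfAlgebra k H]

open Coalgebra HopfAlgebra LinearMap

/-- Product of two representations. -/
noncomputable def mulRepr {a b : H} {ι κ : Type*} (ra : Coalgebra.Repr k a ι)
    (rb : Coalgebra.Repr k b κ) : Coalgebra.Repr k (a * b) (ι × κ) where
  index := ra.index ×ˢ rb.index
  left := fun i => ra.left i.1 * rb.left i.2
  right := fun i => ra.right i.1 * rb.right i.2
  eq := by
    rw [Finset.sum_product]
    rw [Bialgebra.comul_mul, ← ra.eq, ← rb.eq, Finset.sum_mul_sum]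
    simp [Algebra.TensorProduct.tmul_mul_tmul]

@[simp] lemma mulRepr_left {a b : H} {ι κ : Type*} (ra : Coalgebra.Repr k a ι) (rb : Coalgebra.Repr k b κ)
    (x : ra.ι × rb.ι) : (mulRepr ra rb).left x = ra.left x.1 * rb.left x.2 := rfl

@[simp] lemma mulRepr_right {a b : H} {ι κ : Type*} (ra : Coalgebra.Repr k a ι) (rb : Coalgebra.Repr k b κ)
    (x : ra.ι × rb.ι) : (mulRepr ra rb).right x = ra.right x.1 * rb.right x.2 := rfl

@[simp] lemma mulRepr_index {a b : H} {ι κ : Type*} (ra : Coalgebra.Repr k a ι) (rb : Coalgebra.Repr k b κ) :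
    (mulRepr ra rb).index = ra.index ×ˢ rb.index := rfl

lemma repr_counit_left {a : H} {ι : Type*} (r : Coalgebra.Repr k a ι) :
    ∑ i ∈ r.index, counit (R := k) (r.left i) • r.right i = a := by
  have h2 := congrArg (TensorProduct.lid k H) (Coalgebra.sum_counit_tmul_eq r)
  rw [map_sum] at h2
  simp only [TensorProduct.lid_tmul] at h2
  exact h2.trans (one_smul k a)

lemma repr_counit_right {a : H} {ι : Type*} (r : Coalgebra.Repr k a ι) :
    ∑ i ∈ r.index, counit (R := k) (r.right i) • r.left i = a := by
  have h2 := congrArg (TensorProduct.rid k H) (Coalgebra.sum_tmul_counit_eq r)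
  rw [map_sum] at h2
  simp only [TensorProduct.rid_tmul] at h2
  exact h2.trans (one_smul k a)

lemma antipode_one' : antipode (R := k) (A := H) 1 = 1 := by
  have h := mul_antipode_rTensor_comul_apply (R := k) (a := (1:H))
  rw [Bialgebra.comul_one, Bialgebra.counit_one, Algebra.TensorProduct.one_def] at h
  simpa using h

/-- trilinear helper: `u ⊗ (v ⊗ w) ↦ f1 u * (f2 v * f3 w)` -/
noncomputable def tri (f1 f2 f3 : H →ₗ[k] H) : H ⊗[k] (H ⊗[k] H) →ₗ[k] H :=
  mul' k H ∘ₗ TensorProduct.map f1 (mul' k H ∘ₗ TensorProduct.map f2 f3)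

@[simp] lemma tri_tmul (f1 f2 f3 : H →ₗ[k] H) (u v w : H) :
    tri f1 f2 f3 (u ⊗ₜ (v ⊗ₜ w)) = f1 u * (f2 v * f3 w) := by
  simp [tri]

/-- trilinear helper with a functional on the first slot:
`u ⊗ (v ⊗ w) ↦ lam (f1 u) • (f2 v * f3 w)` -/
noncomputable def triL (lam : H →ₗ[k] k) (f1 f2 f3 : H →ₗ[k] H) :
    H ⊗[k] (H ⊗[k] H) →ₗ[k] H :=
  (TensorProduct.lid k H).toLinearMap ∘ₗ
    TensorProduct.map (lam ∘ₗ f1) (mul' k H ∘ₗ TensorProduct.map f2 f3)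

@[simp] lemma triL_tmul (lam : H →ₗ[k] k) (f1 f2 f3 : H →ₗ[k] H) (u v w : H) :
    triL lam f1 f2 f3 (u ⊗ₜ (v ⊗ₜ w)) = lam (f1 u) • (f2 v * f3 w) := by
  simp [triL]

/-- bilinear helper with functional on first slot: `u ⊗ v ↦ lam (f1 u) • f2 v` -/
noncomputable def pairL (lam : H →ₗ[k] k) (f1 f2 : H →ₗ[k] H) : H ⊗[k] H →ₗ[k] H :=
  (TensorProduct.lid k H).toLinearMap ∘ₗ TensorProduct.map (lam ∘ₗ f1) f2

@[simp] lemma pairL_tmul (lam : H →ₗ[k] k) (f1 f2 : H →ₗ[k] H) (u v : H) :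
    pairL lam f1 f2 (u ⊗ₜ v) = lam (f1 u) • f2 v := by
  simp [pairL]

lemma sum4_comm {α β γ δ M : Type*} [AddCommMonoid M] (s : Finset α) (t : Finset β)
    (u : α → Finset γ) (v : β → Finset δ) (f : α → γ → β → δ → M) :
    ∑ p ∈ t, ∑ q ∈ v p, ∑ i ∈ s, ∑ j ∈ u i, f i j p q
      = ∑ i ∈ s, ∑ j ∈ u i, ∑ p ∈ t, ∑ q ∈ v p, f i j p q := by
  calc ∑ p ∈ t, ∑ q ∈ v p, ∑ i ∈ s, ∑ j ∈ u i, f i j p q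
      = ∑ p ∈ t, ∑ i ∈ s, ∑ q ∈ v p, ∑ j ∈ u i, f i j p q :=
        Finset.sum_congr rfl fun p _ => Finset.sum_comm
    _ = ∑ i ∈ s, ∑ p ∈ t, ∑ q ∈ v p, ∑ j ∈ u i, f i j p q := Finset.sum_comm
    _ = ∑ i ∈ s, ∑ p ∈ t, ∑ j ∈ u i, ∑ q ∈ v p, f i j p q :=
        Finset.sum_congr rfl fun i _ => Finset.sum_congr rfl fun p _ => Finset.sum_comm
    _ = ∑ i ∈ s, ∑ j ∈ u i, ∑ p ∈ t, ∑ q ∈ v p, f i j p q :=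
        Finset.sum_congr rfl fun i _ => Finset.sum_comm

lemma sum3_comm {α β δ M : Type*} [AddCommMonoid M] (s : Finset α) (t : Finset β)
    (v : β → Finset δ) (f : α → β → δ → M) :
    ∑ p ∈ t, ∑ q ∈ v p, ∑ i ∈ s, f i p q = ∑ i ∈ s, ∑ p ∈ t, ∑ q ∈ v p, f i p q := by
  calc ∑ p ∈ t, ∑ q ∈ v p, ∑ i ∈ s, f i p q
      = ∑ p ∈ t, ∑ i ∈ s, ∑ q ∈ v p, f i p q :=
        Finset.sum_congr rfl fun p _ => Finset.sum_comm
    _ = ∑ i ∈ s, ∑ p ∈ t, ∑ q ∈ v p, f i p q := Finset.sum_comm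

lemma antipode_mul' (a b : H) :
    antipode (R := k) (a * b) = antipode (R := k) b * antipode (R := k) a := by
  classical
  set S : H →ₗ[k] H := antipode (R := k) with hSdef
  obtain ⟨ra⟩ : Nonempty (Coalgebra.Repr k a (H × H)) := ⟨ℛ k a⟩
  obtain ⟨rb⟩ : Nonempty (Coalgebra.Repr k b (H × H)) := ⟨ℛ k b⟩
  set rA : ∀ i, Coalgebra.Repr k (ra.right i) (H × H) := fun i => ℛ k _ with hrA
  set rL : ∀ i, Coalgebra.Repr k (ra.left i) (H × H) := fun i => ℛ k _ with hrL
  set rB : ∀ p, Coalgebra.Repr k (rb.right p) (H × H) := fun p => ℛ k _ with hrB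
  set rM : ∀ p, Coalgebra.Repr k (rb.left p) (H × H) := fun p => ℛ k _ with hrM
  set X : H := ∑ p ∈ rb.index, ∑ q ∈ (rB p).index, ∑ i ∈ ra.index, ∑ j ∈ (rA i).index,
      S (ra.left i * rb.left p) *
        (((rA i).left j * (rB p).left q) *
          (S ((rB p).right q) * S ((rA i).right j))) with hX
  have claim1 : X = S (a * b) := by
    have hinner : ∀ i ∈ ra.index, ∀ p ∈ rb.index,
        (∑ p' ∈ (rB p).index, ∑ j ∈ (rA i).index,
          S (ra.left i * rb.left p) *
            (((rA i).left j * (rB p).left p') *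
              (S ((rB p).right p') * S ((rA i).right j))))
        = (counit (R := k) (rb.right p) * counit (R := k) (ra.right i)) •
            S (ra.left i * rb.left p) := by
      intro i _ p _
      rw [Finset.sum_comm]
      have hj : ∀ j ∈ (rA i).index,
          (∑ q ∈ (rB p).index,
            S (ra.left i * rb.left p) *
              (((rA i).left j * (rB p).left q) *
                (S ((rB p).right q) * S ((rA i).right j))))
          = counit (R := k) (rb.right p) •
              (S (ra.left i * rb.left p) * ((rA i).left j * S ((rA i).right j))) := by
        intro j _
        have reassoc : ∀ q, ((rA i).left j * (rB p).left q) *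
            (S ((rB p).right q) * S ((rA i).right j))
            = (rA i).left j *
              (((rB p).left q * S ((rB p).right q)) * S ((rA i).right j)) := by
          intro q; simp only [mul_assoc]
        simp only [reassoc]
        rw [← Finset.mul_sum, ← Finset.mul_sum, ← Finset.sum_mul,
          HopfAlgebra.sum_mul_antipode_eq_smul (rB p)]
        rw [smul_mul_assoc, one_mul, mul_smul_comm, mul_smul_comm]
      rw [Finset.sum_congr rfl hj, ← Finset.smul_sum, ← Finset.mul_sum,
        HopfAlgebra.sum_mul_antipode_eq_smul (rA i)]
      rw [mul_smul_comm, mul_one, smul_smul]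
    calc X = ∑ i ∈ ra.index, ∑ p ∈ rb.index, ∑ q ∈ (rB p).index, ∑ j ∈ (rA i).index,
          S (ra.left i * rb.left p) *
            (((rA i).left j * (rB p).left q) *
              (S ((rB p).right q) * S ((rA i).right j))) := by
          rw [hX]
          exact sum3_comm (M := H) ra.index rb.index (fun p => (rB p).index) _
      _ = ∑ i ∈ ra.index, ∑ p ∈ rb.index,
            (counit (R := k) (rb.right p) * counit (R := k) (ra.right i)) •
              S (ra.left i * rb.left p) :=
          Finset.sum_congr rfl fun i hi => Finset.sum_congr rfl fun p hp => hinner i hi p hp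
      _ = S (∑ i ∈ ra.index, ∑ p ∈ rb.index,
            (counit (R := k) (rb.right p) * counit (R := k) (ra.right i)) •
              (ra.left i * rb.left p)) := by
          simp only [map_sum, map_smul]
      _ = S (a * b) := by
          congr 1
          calc ∑ i ∈ ra.index, ∑ p ∈ rb.index,
                (counit (R := k) (rb.right p) * counit (R := k) (ra.right i)) •
                  (ra.left i * rb.left p)
              = ∑ i ∈ ra.index, ∑ p ∈ rb.index,
                  (counit (R := k) (ra.right i) • ra.left i) *
                    (counit (R := k) (rb.right p) • rb.left p) := by
                refine Finset.sum_congr rfl fun i _ => Finset.sum_congr rfl fun p _ => ?_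
                rw [smul_mul_assoc, mul_smul_comm, smul_smul, mul_comm]
            _ = (∑ i ∈ ra.index, counit (R := k) (ra.right i) • ra.left i) *
                  (∑ p ∈ rb.index, counit (R := k) (rb.right p) • rb.left p) := by
                rw [Finset.sum_mul_sum]
            _ = a * b := by rw [repr_counit_right ra, repr_counit_right rb]
  have claim2 : X = S b * S a := by
    have hFa : ∀ (F : H ⊗[k] (H ⊗[k] H) →ₗ[k] H),
        (∑ i ∈ ra.index, ∑ j ∈ (rA i).index,
          F (ra.left i ⊗ₜ[k] ((rA i).left j ⊗ₜ[k] (rA i).right j)))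
        = ∑ i ∈ ra.index, ∑ j ∈ (rL i).index,
            F ((rL i).left j ⊗ₜ[k] ((rL i).right j ⊗ₜ[k] ra.right i)) := by
      intro F
      have h := congrArg F (Coalgebra.sum_tmul_tmul_eq ra rL rA)
      simpa only [map_sum] using h.symm
    have hFb : ∀ (F : H ⊗[k] (H ⊗[k] H) →ₗ[k] H),
        (∑ p ∈ rb.index, ∑ q ∈ (rB p).index,
          F (rb.left p ⊗ₜ[k] ((rB p).left q ⊗ₜ[k] (rB p).right q)))
        = ∑ p ∈ rb.index, ∑ q ∈ (rM p).index,
            F ((rM p).left q ⊗ₜ[k] ((rM p).right q ⊗ₜ[k] rb.right p)) := by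
      intro F
      have h := congrArg F (Coalgebra.sum_tmul_tmul_eq rb rM rB)
      simpa only [map_sum] using h.symm
    calc X = ∑ p ∈ rb.index, ∑ q ∈ (rB p).index, ∑ i ∈ ra.index, ∑ j ∈ (rL i).index,
          S ((rL i).left j * rb.left p) *
            (((rL i).right j * (rB p).left q) *
              (S ((rB p).right q) * S (ra.right i))) := by
          rw [hX]
          refine Finset.sum_congr rfl fun p _ => Finset.sum_congr rfl fun q _ => ?_
          have h := hFa (tri (S ∘ₗ mulRight k (rb.left p)) (mulRight k ((rB p).left q))
            (mulLeft k (S ((rB p).right q)) ∘ₗ S))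
          simpa only [tri_tmul, LinearMap.comp_apply, mulRight_apply, mulLeft_apply] using h
      _ = ∑ i ∈ ra.index, ∑ j ∈ (rL i).index, ∑ p ∈ rb.index, ∑ q ∈ (rB p).index,
          S ((rL i).left j * rb.left p) *
            (((rL i).right j * (rB p).left q) *
              (S ((rB p).right q) * S (ra.right i))) :=
          sum4_comm (M := H) ra.index rb.index (fun i => (rL i).index) (fun p => (rB p).index) _
      _ = ∑ i ∈ ra.index, ∑ j ∈ (rL i).index, ∑ p ∈ rb.index, ∑ q ∈ (rM p).index,
          S ((rL i).left j * (rM p).left q) *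
            (((rL i).right j * (rM p).right q) *
              (S (rb.right p) * S (ra.right i))) := by
          refine Finset.sum_congr rfl fun i _ => Finset.sum_congr rfl fun j _ => ?_
          have h := hFb (tri (S ∘ₗ mulLeft k ((rL i).left j)) (mulLeft k ((rL i).right j))
            (mulRight k (S (ra.right i)) ∘ₗ S))
          simpa only [tri_tmul, LinearMap.comp_apply, mulRight_apply, mulLeft_apply] using h
      _ = ∑ i ∈ ra.index, ∑ p ∈ rb.index, ∑ j ∈ (rL i).index, ∑ q ∈ (rM p).index,
          S ((rL i).left j * (rM p).left q) *
            (((rL i).right j * (rM p).right q) *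
              (S (rb.right p) * S (ra.right i))) :=
          Finset.sum_congr rfl fun i _ => Finset.sum_comm
      _ = ∑ i ∈ ra.index, ∑ p ∈ rb.index,
            (counit (R := k) (ra.left i * rb.left p)) •
              (S (rb.right p) * S (ra.right i)) := by
          refine Finset.sum_congr rfl fun i _ => Finset.sum_congr rfl fun p _ => ?_
          have reassoc : ∀ (j : (rL i).ι) (q : (rM p).ι),
              S ((rL i).left j * (rM p).left q) *
                (((rL i).right j * (rM p).right q) *
                  (S (rb.right p) * S (ra.right i)))
              = (S ((rL i).left j * (rM p).left q) *
                  ((rL i).right j * (rM p).right q)) *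
                  (S (rb.right p) * S (ra.right i)) := by
            intro j q; exact (mul_assoc _ _ _).symm
          simp only [reassoc]
          simp only [← Finset.sum_mul]
          have hcol : (∑ j ∈ (rL i).index, ∑ q ∈ (rM p).index,
              S ((rL i).left j * (rM p).left q) *
                ((rL i).right j * (rM p).right q))
              = counit (R := k) (ra.left i * rb.left p) • 1 := by
            have h := HopfAlgebra.sum_antipode_mul_eq_smul (R := k) (mulRepr (rL i) (rM p))
            simp only [mulRepr_index, mulRepr_left, mulRepr_right] at h
            rw [← Finset.sum_product']
            exact h
          rw [hcol, smul_mul_assoc, one_mul]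
      _ = S b * S a := by
          have hb : (∑ p ∈ rb.index, counit (R := k) (rb.left p) • S (rb.right p)) = S b := by
            have h := congrArg S (repr_counit_left rb)
            rw [map_sum] at h
            simp only [map_smul] at h
            exact h
          have ha : (∑ i ∈ ra.index, counit (R := k) (ra.left i) • S (ra.right i)) = S a := by
            have h := congrArg S (repr_counit_left ra)
            rw [map_sum] at h
            simp only [map_smul] at h
            exact h
          have hstep : ∀ i ∈ ra.index,
              (∑ p ∈ rb.index, counit (R := k) (ra.left i * rb.left p) •
                (S (rb.right p) * S (ra.right i)))
              = counit (R := k) (ra.left i) • (S b * S (ra.right i)) := by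
            intro i _
            have hterm : ∀ p, counit (R := k) (ra.left i * rb.left p) •
                (S (rb.right p) * S (ra.right i))
                = counit (R := k) (ra.left i) •
                    ((counit (R := k) (rb.left p) • S (rb.right p)) * S (ra.right i)) := by
              intro p
              rw [Bialgebra.counit_mul, mul_smul, smul_mul_assoc]
            simp only [hterm]
            rw [← Finset.smul_sum, ← Finset.sum_mul, hb]
          rw [Finset.sum_congr rfl hstep]
          calc ∑ i ∈ ra.index, counit (R := k) (ra.left i) • (S b * S (ra.right i))
              = S b * ∑ i ∈ ra.index, counit (R := k) (ra.left i) • S (ra.right i) := by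
                rw [Finset.mul_sum]
                exact Finset.sum_congr rfl fun i _ => (mul_smul_comm _ _ _).symm
            _ = S b * S a := by rw [ha]
  rw [← claim1, claim2]

section Grouplike

variable {g : H} (hg : Coalgebra.comul (R := k) g = g ⊗ₜ[k] g)
  (hgε : Coalgebra.counit (R := k) g = 1)

include hg hgε

lemma antipode_mul_self : antipode (R := k) g * g = 1 := by
  have h := mul_antipode_rTensor_comul_apply (R := k) (a := g)
  rw [hg, hgε] at h
  simpa using h

lemma mul_antipode_self : g * antipode (R := k) g = 1 := by
  have h := mul_antipode_lTensor_comul_apply (R := k) (a := g)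
  rw [hg, hgε] at h
  simpa using h

lemma antipode_antipode_self : antipode (R := k) (antipode (R := k) g) = g := by
  have h1 : antipode (R := k) (antipode (R := k) g) * antipode (R := k) g = 1 := by
    rw [← antipode_mul' g (antipode (R := k) g), mul_antipode_self hg hgε, antipode_one']
  calc antipode (R := k) (antipode (R := k) g)
      = antipode (R := k) (antipode (R := k) g) * (antipode (R := k) g * g) := by
        rw [antipode_mul_self hg hgε, mul_one]
    _ = g := by rw [← mul_assoc, h1, one_mul]

end Grouplike

section Lam

variable (lam : H →ₗ[k] k) {g : H}
  (hglam : ∀ h : H, swl lam h = lam h • HopfAlgebra.antipode (R := k) g)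

include hglam

/-- `hglam` for an arbitrary representation: `∑ λ(a₁) • a₂ = λ(a) • S g`. -/
lemma integral_repr {a : H} {ι : Type*} (r : Coalgebra.Repr k a ι) :
    ∑ i ∈ r.index, lam (r.left i) • r.right i
      = lam a • antipode (R := k) (A := H) g := by
  have h := hglam a
  rw [swl, LinearMap.comp_apply, LinearMap.comp_apply, ← r.eq, map_sum] at h
  simp only [rTensor_tmul, map_sum, LinearEquiv.coe_coe, TensorProduct.lid_tmul] at h
  exact h

/-- The key identity (∗∗): `∑ λ(a₁ b) • a₂ = ∑ λ(a b₁) • (S g * S b₂)`. -/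
lemma star2 {a b : H} {ι κ : Type*} (ra : Coalgebra.Repr k a ι) (rb : Coalgebra.Repr k b κ) :
    ∑ i ∈ ra.index, lam (ra.left i * b) • ra.right i
      = ∑ p ∈ rb.index, lam (a * rb.left p) •
          (antipode (R := k) g * antipode (R := k) (rb.right p)) := by
  classical
  set S : H →ₗ[k] H := antipode (R := k) with hSdef
  set rC : ∀ p, Coalgebra.Repr k (rb.left p) (H × H) := fun p => ℛ k _ with hrC
  set rD : ∀ p, Coalgebra.Repr k (rb.right p) (H × H) := fun p => ℛ k _ with hrD
  symm
  calc ∑ p ∈ rb.index, lam (a * rb.left p) • (S g * S (rb.right p))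
      = ∑ p ∈ rb.index, (lam (a * rb.left p) • S g) * S (rb.right p) := by
        refine Finset.sum_congr rfl fun p _ => ?_
        rw [smul_mul_assoc]
    _ = ∑ p ∈ rb.index, (∑ x ∈ ra.index ×ˢ (rC p).index,
          lam (ra.left x.1 * (rC p).left x.2) • (ra.right x.1 * (rC p).right x.2))
            * S (rb.right p) := by
        refine Finset.sum_congr rfl fun p _ => ?_
        congr 1
        have h := integral_repr lam hglam (mulRepr ra (rC p))
        simp only [mulRepr_index, mulRepr_left, mulRepr_right] at h
        exact h.symm
    _ = ∑ i ∈ ra.index, ∑ p ∈ rb.index, ∑ j ∈ (rC p).index,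
          lam (ra.left i * (rC p).left j) •
            ((ra.right i * (rC p).right j) * S (rb.right p)) := by
        simp only [Finset.sum_product, Finset.sum_mul, smul_mul_assoc]
        exact Finset.sum_comm
    _ = ∑ i ∈ ra.index, ∑ p ∈ rb.index, ∑ j ∈ (rC p).index,
          triL lam (mulLeft k (ra.left i)) (mulLeft k (ra.right i)) S
            ((rC p).left j ⊗ₜ[k] ((rC p).right j ⊗ₜ[k] rb.right p)) := by
        refine Finset.sum_congr rfl fun i _ => Finset.sum_congr rfl fun p _ =>
          Finset.sum_congr rfl fun j _ => ?_
        simp only [triL_tmul, mulLeft_apply, mul_assoc]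
    _ = ∑ i ∈ ra.index, ∑ p ∈ rb.index, ∑ q ∈ (rD p).index,
          triL lam (mulLeft k (ra.left i)) (mulLeft k (ra.right i)) S
            (rb.left p ⊗ₜ[k] ((rD p).left q ⊗ₜ[k] (rD p).right q)) := by
        refine Finset.sum_congr rfl fun i _ => ?_
        have h := congrArg (triL lam (mulLeft k (ra.left i)) (mulLeft k (ra.right i)) S)
          (Coalgebra.sum_tmul_tmul_eq rb rC rD)
        simpa only [map_sum] using h
    _ = ∑ i ∈ ra.index, ∑ p ∈ rb.index,
          lam (ra.left i * rb.left p) •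
            (ra.right i * (counit (R := k) (rb.right p) • (1 : H))) := by
        refine Finset.sum_congr rfl fun i _ => Finset.sum_congr rfl fun p _ => ?_
        simp only [triL_tmul, mulLeft_apply, mul_assoc]
        rw [← Finset.smul_sum, ← Finset.mul_sum,
          HopfAlgebra.sum_mul_antipode_eq_smul (rD p)]
    _ = ∑ i ∈ ra.index, lam (ra.left i * b) • ra.right i := by
        refine Finset.sum_congr rfl fun i _ => ?_
        have hterm : ∀ p, lam (ra.left i * rb.left p) •
            (ra.right i * (counit (R := k) (rb.right p) • (1 : H)))
            = lam (ra.left i * (counit (R := k) (rb.right p) • rb.left p)) • ra.right i := by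
          intro p
          rw [mul_smul_comm, mul_one, smul_smul, mul_smul_comm, map_smul, smul_eq_mul,
            mul_comm]
        rw [Finset.sum_congr rfl fun p _ => hterm p, ← Finset.sum_smul]
        congr 1
        calc ∑ p ∈ rb.index, lam (ra.left i * (counit (R := k) (rb.right p) • rb.left p))
            = lam (∑ p ∈ rb.index, ra.left i * (counit (R := k) (rb.right p) • rb.left p)) :=
              (map_sum lam _ _).symm
          _ = lam (ra.left i * ∑ p ∈ rb.index, counit (R := k) (rb.right p) • rb.left p) := by
              rw [← Finset.mul_sum]
          _ = lam (ra.left i * b) := by rw [repr_counit_right rb]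

end Lam


/-- Separation: if `λ(c·x)` vanishes for all `x` implies `c = 0` (injectivity of
`c ↦ λ ∘ mulLeft c`), then elements of `H ⊗ H` are determined by all the pairings
`c ⊗ d ↦ λ(c x) • d`. -/
lemma tensor_sep (lam : H →ₗ[k] k)
    (hinj : Function.Injective (fun h : H => lam ∘ₗ LinearMap.mulLeft k h))
    (A B : H ⊗[k] H)
    (hAB : ∀ x : H, pairL lam (mulRight k x) LinearMap.id A
        = pairL lam (mulRight k x) LinearMap.id B) : A = B := by
  classical
  have hz : ∀ D : H ⊗[k] H, (∀ x, pairL lam (mulRight k x) LinearMap.id D = 0) → D = 0 := by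
    intro D hD
    obtain ⟨s, rep⟩ := TensorProduct.exists_finset (R := k) D
    set bH := Module.Basis.ofVectorSpace k H with hbH
    set t : Finset _ := s.biUnion (fun z => (bH.repr z.2).support) with ht
    have hrepr : ∀ z ∈ s, (z.2 : H) = ∑ i ∈ t, bH.repr z.2 i • bH i := by
      intro z hz
      have hsub : (bH.repr z.2).support ⊆ t := by
        intro i hi
        exact Finset.mem_biUnion.2 ⟨z, hz, hi⟩
      have hsupp : ∑ i ∈ t, bH.repr z.2 i • bH i
          = ∑ i ∈ (bH.repr z.2).support, bH.repr z.2 i • bH i :=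
        (Finset.sum_subset hsub (fun i _ hni => by
          rw [Finsupp.notMem_support_iff.1 hni, zero_smul])).symm
      have h2 := bH.linearCombination_repr z.2
      rw [Finsupp.linearCombination_apply, Finsupp.sum] at h2
      exact (hsupp.trans h2).symm
    have hD2 : D = ∑ i ∈ t, (∑ z ∈ s, bH.repr z.2 i • z.1) ⊗ₜ[k] bH i := by
      calc D = ∑ z ∈ s, z.1 ⊗ₜ[k] z.2 := rep
        _ = ∑ z ∈ s, z.1 ⊗ₜ[k] (∑ i ∈ t, bH.repr z.2 i • bH i) :=
            Finset.sum_congr rfl fun z hzs => by rw [← hrepr z hzs]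
        _ = ∑ z ∈ s, ∑ i ∈ t, bH.repr z.2 i • (z.1 ⊗ₜ[k] bH i) := by
            refine Finset.sum_congr rfl fun z _ => ?_
            rw [TensorProduct.tmul_sum]
            exact Finset.sum_congr rfl fun i _ => by rw [TensorProduct.tmul_smul]
        _ = ∑ i ∈ t, ∑ z ∈ s, bH.repr z.2 i • (z.1 ⊗ₜ[k] bH i) := Finset.sum_comm
        _ = ∑ i ∈ t, (∑ z ∈ s, bH.repr z.2 i • z.1) ⊗ₜ[k] bH i := by
            refine Finset.sum_congr rfl fun i _ => ?_
            rw [TensorProduct.sum_tmul]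
            exact Finset.sum_congr rfl fun z _ => by rw [TensorProduct.smul_tmul']
    have hw : ∀ i ∈ t, (∑ z ∈ s, bH.repr z.2 i • z.1) = 0 := by
      intro i hi
      have hcoef : ∀ x : H, lam ((∑ z ∈ s, bH.repr z.2 i • z.1) * x) = 0 := by
        intro x
        have h0 := hD x
        rw [hD2, map_sum] at h0
        simp only [pairL_tmul, mulRight_apply, LinearMap.id_coe, id_eq] at h0
        have hli := linearIndependent_iff'.1 bH.linearIndependent t
          (fun i => lam ((∑ z ∈ s, bH.repr z.2 i • z.1) * x)) h0 i hi
        exact hli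
      have : (fun h : H => lam ∘ₗ LinearMap.mulLeft k h) (∑ z ∈ s, bH.repr z.2 i • z.1)
          = (fun h : H => lam ∘ₗ LinearMap.mulLeft k h) 0 := by
        ext y
        simp only [LinearMap.comp_apply, mulLeft_apply, LinearMap.zero_comp,
          LinearMap.zero_apply]
        rw [hcoef y]
        simp
      exact hinj this
    rw [hD2]
    refine Finset.sum_eq_zero fun i hi => ?_
    rw [hw i hi, TensorProduct.zero_tmul]
  have := hz (A - B) (fun x => by rw [map_sub, hAB x, sub_self])
  exact sub_eq_zero.1 this


/-- Same setting as the co-Frobenius `S⁴` formula: `λ ≠ 0` a left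
integral for `H` in `H⁎` with `h ↦ λ ↼ h` injective, `χ` a bijective algebra endomorphism
with `λ(x·h) = λ(χ(h)·x)`, `α := ε ∘ χ`, and `g` grouplike with `λ(h₁)·h₂ = λ(h)·S(g)`.
Then `χ(h) = α(h₁)·S(g)·S²(h₂)·g` (i.e. `χ(h) = α(h₁)·g⁻¹·S²(h₂)·g`) for all `h`. -/
theorem statement11
    (hS : Function.Bijective ⇑(HopfAlgebra.antipode (R := k) (A := H)))
    (lam : H →ₗ[k] k) (hlam0 : lam ≠ 0)
    (hlaml : ∀ h : H, swr lam h = lam h • (1 : H))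
    (hinj : Function.Injective (fun h : H => lam ∘ₗ LinearMap.mulLeft k h))
    (χ : H →ₐ[k] H) (hχbij : Function.Bijective ⇑χ)
    (hχ : ∀ x h : H, lam (x * h) = lam (χ h * x))
    (g : H) (hg : Coalgebra.comul (R := k) g = g ⊗ₜ[k] g)
    (hgε : Coalgebra.counit (R := k) g = 1)
    (hglam : ∀ h : H, swl lam h = lam h • HopfAlgebra.antipode (R := k) g) :
    ∀ h : H,
      χ h =
        sw2 ((Algebra.linearMap k H) ∘ₗ (Coalgebra.counit (R := k) ∘ₗ χ.toLinearMap))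
          ((LinearMap.mulLeft k (HopfAlgebra.antipode (R := k) g)) ∘ₗ
            (LinearMap.mulRight k g) ∘ₗ
            (HopfAlgebra.antipode (R := k)) ∘ₗ (HopfAlgebra.antipode (R := k))) h := by
  intro h
  classical
  obtain ⟨rh⟩ : Nonempty (Coalgebra.Repr k h (H × H)) := ⟨ℛ k h⟩
  obtain ⟨rχ⟩ : Nonempty (Coalgebra.Repr k (χ h) (H × H)) := ⟨ℛ k (χ h)⟩
  have key : ∀ x : H,
      pairL lam (mulRight k x) LinearMap.id (Coalgebra.comul (R := k) (χ h))
        = pairL lam (mulRight k x) LinearMap.id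
            (∑ q ∈ rh.index, χ (rh.left q) ⊗ₜ[k]
              (antipode (R := k) g *
                (antipode (R := k) (antipode (R := k) (rh.right q)) * g))) := by
    intro x
    obtain ⟨rx⟩ : Nonempty (Coalgebra.Repr k x (H × H)) := ⟨ℛ k x⟩
    have e1 := star2 lam hglam rχ rx
    have e2 := star2 lam hglam rx rh
    calc pairL lam (mulRight k x) LinearMap.id (Coalgebra.comul (R := k) (χ h))
        = ∑ i ∈ rχ.index, lam (rχ.left i * x) • rχ.right i := by
          rw [← rχ.eq, map_sum]
          simp only [pairL_tmul, mulRight_apply, LinearMap.id_coe, id_eq]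
      _ = ∑ p ∈ rx.index, lam (χ h * rx.left p) •
            (antipode (R := k) g * antipode (R := k) (rx.right p)) := e1
      _ = ∑ p ∈ rx.index, lam (rx.left p * h) •
            (antipode (R := k) g * antipode (R := k) (rx.right p)) := by
          refine Finset.sum_congr rfl fun p _ => ?_
          rw [← hχ (rx.left p) h]
      _ = antipode (R := k) g * antipode (R := k)
            (∑ p ∈ rx.index, lam (rx.left p * h) • rx.right p) := by
          rw [map_sum, Finset.mul_sum]
          refine Finset.sum_congr rfl fun p _ => ?_
          rw [map_smul, mul_smul_comm]
      _ = antipode (R := k) g * antipode (R := k)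
            (∑ q ∈ rh.index, lam (x * rh.left q) •
              (antipode (R := k) g * antipode (R := k) (rh.right q))) := by
          rw [e2]
      _ = ∑ q ∈ rh.index, lam (x * rh.left q) •
            (antipode (R := k) g *
              (antipode (R := k) (antipode (R := k) (rh.right q)) * g)) := by
          rw [map_sum, Finset.mul_sum]
          refine Finset.sum_congr rfl fun q _ => ?_
          rw [map_smul, mul_smul_comm]
          congr 2
          rw [antipode_mul', antipode_antipode_self hg hgε]
      _ = pairL lam (mulRight k x) LinearMap.id
            (∑ q ∈ rh.index, χ (rh.left q) ⊗ₜ[k]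
              (antipode (R := k) g *
                (antipode (R := k) (antipode (R := k) (rh.right q)) * g))) := by
          rw [map_sum]
          simp only [pairL_tmul, mulRight_apply, LinearMap.id_coe, id_eq]
          refine Finset.sum_congr rfl fun q _ => ?_
          rw [← hχ x (rh.left q)]
  have hcomul : Coalgebra.comul (R := k) (χ h)
      = ∑ q ∈ rh.index, χ (rh.left q) ⊗ₜ[k]
          (antipode (R := k) g *
            (antipode (R := k) (antipode (R := k) (rh.right q)) * g)) :=
    tensor_sep lam hinj _ _ key
  have hfin : χ h = ∑ q ∈ rh.index, Coalgebra.counit (R := k) (χ (rh.left q)) •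
      (antipode (R := k) g *
        (antipode (R := k) (antipode (R := k) (rh.right q)) * g)) := by
    have h2 := congrArg (fun z : H ⊗[k] H => (TensorProduct.lid k H)
      ((Coalgebra.counit (R := k) (A := H)).rTensor H z)) hcomul
    simp only [Coalgebra.rTensor_counit_comul, map_sum, rTensor_tmul,
      TensorProduct.lid_tmul, one_smul] at h2
    exact h2
  rw [hfin, sw2, LinearMap.comp_apply, LinearMap.comp_apply, ← rh.eq, map_sum, map_sum]
  simp only [TensorProduct.map_tmul, LinearMap.mul'_apply, LinearMap.comp_apply,
    Algebra.linearMap_apply, mulLeft_apply, mulRight_apply, AlgHom.toLinearMap_apply]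
  refine Finset.sum_congr rfl fun q _ => ?_
  rw [← Algebra.smul_def]
end
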